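/- arXiv:math/0302033 — 6 statements merged into one kernel-verified Lean document; each statement's English description precedes it below -/
import Mathlib

section
/- For every s ≥ 0 and every α ∈ ℝ, the kernel L⁺_s is square integrable on (α,∞) × (α,∞), i.e. ∫_α^∞ ∫_α^∞ L⁺_s(x,y)² dx dy < ∞ (so the associated integral operator on L²(α,∞) is Hilbert–Schmidt). -/
open MeasureTheory Real Set

/-- `L⁺_s(x,y) = ∫₀^∞ e^{−z·s}·A(x+z)·A(y+z) dz`, the extended Airy kernel entry
for `s = τ_i − τ_j ≥ 0`. -/
noncomputable def Lplus (A : ℝ → ℝ) (s x y : ℝ) : ℝ :=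
  ∫ z in Set.Ioi (0 : ℝ), Real.exp (-(z * s)) * A (x + z) * A (y + z)

/-- For every `s ≥ 0` and every `α ∈ ℝ`, the kernel `L⁺_s` is square integrable on
`(α,∞) × (α,∞)`, i.e. `∫_α^∞ ∫_α^∞ L⁺_s(x,y)² dx dy < ∞`; hence the associated
integral operator on `L²(α,∞)` is Hilbert–Schmidt. -/
theorem lplus_square_integrable
    (A : ℝ → ℝ) (hA : ContDiff ℝ 2 A)
    (hAiry : ∀ t : ℝ, deriv (deriv A) t = t * A t)
    (C : ℝ) (hC : 0 < C)
    (hA1 : ∀ t : ℝ, 0 ≤ t → |A t| ≤ C * Real.exp (-t))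
    (hA1' : ∀ t : ℝ, 0 ≤ t → |deriv A t| ≤ C * Real.exp (-t))
    (hA2 : ∀ t : ℝ, t ≤ 0 → |A t| ≤ C * (1 + |t|))
    (hA2' : ∀ t : ℝ, t ≤ 0 → |deriv A t| ≤ C * (1 + |t|))
    (s : ℝ) (hs : 0 ≤ s) (α : ℝ) :
    IntegrableOn (fun p : ℝ × ℝ => (Lplus A s p.1 p.2) ^ 2)
      (Set.Ioi α ×ˢ Set.Ioi α) := by
  have hAcont : Continuous A := hA.continuous
  -- global exponential bound on A
  have hAb : ∀ t : ℝ, |A t| ≤ C * Real.exp (-t) := by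
    intro t
    rcases le_or_gt 0 t with ht | ht
    · exact hA1 t ht
    · have h1 : |A t| ≤ C * (1 + |t|) := hA2 t ht.le
      have h2 : (1 : ℝ) + |t| ≤ Real.exp (-t) := by
        rw [abs_of_neg ht]
        have := Real.add_one_le_exp (-t)
        linarith
      calc |A t| ≤ C * (1 + |t|) := h1
        _ ≤ C * Real.exp (-t) := by nlinarith
  -- pointwise bound on Lplus
  have hLb : ∀ x y : ℝ, |Lplus A s x y| ≤ C ^ 2 * (Real.exp (-x) * Real.exp (-y)) := by
    intro x y
    have hg : IntegrableOn
        (fun z : ℝ => C ^ 2 * Real.exp (-x) * Real.exp (-y) * Real.exp (-z)) (Ioi 0) := by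
      have := (exp_neg_integrableOn_Ioi (0:ℝ) (by norm_num : (0:ℝ) < 1)).const_mul
        (C ^ 2 * Real.exp (-x) * Real.exp (-y))
      simpa [IntegrableOn] using this
    have hbd : ∀ᵐ z ∂(volume.restrict (Ioi (0:ℝ))),
        ‖Real.exp (-(z * s)) * A (x + z) * A (y + z)‖ ≤
          C ^ 2 * Real.exp (-x) * Real.exp (-y) * Real.exp (-z) := by
      filter_upwards [ae_restrict_mem measurableSet_Ioi] with z hz
      have hz' : (0:ℝ) < z := hz
      have he : Real.exp (-(z * s)) ≤ 1 := by
        apply Real.exp_le_one_iff.mpr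
        simp only [neg_nonpos]
        positivity
      have h1 := hAb (x + z)
      have h2 := hAb (y + z)
      have hmono : Real.exp (-(x+z)) * Real.exp (-(y+z)) ≤
          Real.exp (-x) * Real.exp (-y) * Real.exp (-z) := by
        rw [← Real.exp_add, ← Real.exp_add, ← Real.exp_add]
        exact Real.exp_le_exp.mpr (by linarith)
      calc ‖Real.exp (-(z * s)) * A (x + z) * A (y + z)‖
          = Real.exp (-(z * s)) * |A (x + z)| * |A (y + z)| := by
            rw [Real.norm_eq_abs, abs_mul, abs_mul, abs_of_pos (Real.exp_pos _)]
        _ ≤ 1 * (C * Real.exp (-(x+z))) * (C * Real.exp (-(y+z))) := by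
            apply mul_le_mul _ h2 (abs_nonneg _) (by positivity)
            exact mul_le_mul he h1 (abs_nonneg _) (by norm_num)
        _ = C ^ 2 * (Real.exp (-(x+z)) * Real.exp (-(y+z))) := by ring
        _ ≤ C ^ 2 * Real.exp (-x) * Real.exp (-y) * Real.exp (-z) := by nlinarith
    have hnorm := norm_integral_le_of_norm_le hg hbd
    have hval : (∫ z in Ioi (0:ℝ),
        C ^ 2 * Real.exp (-x) * Real.exp (-y) * Real.exp (-z)) =
        C ^ 2 * (Real.exp (-x) * Real.exp (-y)) := by
      rw [integral_const_mul, integral_exp_neg_Ioi_zero]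
      ring
    rw [Lplus] at *
    calc |∫ z in Ioi (0:ℝ), Real.exp (-(z * s)) * A (x + z) * A (y + z)|
        ≤ ∫ z in Ioi (0:ℝ), C ^ 2 * Real.exp (-x) * Real.exp (-y) * Real.exp (-z) := by
          simpa using hnorm
      _ = C ^ 2 * (Real.exp (-x) * Real.exp (-y)) := hval
  -- measurability of Lplus
  have hF : StronglyMeasurable (fun q : (ℝ × ℝ) × ℝ =>
      Real.exp (-(q.2 * s)) * A (q.1.1 + q.2) * A (q.1.2 + q.2)) := by
    apply Continuous.stronglyMeasurable
    fun_prop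
  have hM : StronglyMeasurable (fun p : ℝ × ℝ => Lplus A s p.1 p.2) :=
    hF.integral_prod_right' (ν := volume.restrict (Ioi 0))
  -- majorant on the product
  have hmaj1 : IntegrableOn (fun x : ℝ => (C ^ 2) ^ 2 * Real.exp (-2 * x)) (Ioi α) :=
    (exp_neg_integrableOn_Ioi α (by norm_num : (0:ℝ) < 2)).const_mul _
  have hmaj2 : IntegrableOn (fun y : ℝ => Real.exp (-2 * y)) (Ioi α) :=
    exp_neg_integrableOn_Ioi α (by norm_num : (0:ℝ) < 2)
  have hprod : Integrable
      (fun p : ℝ × ℝ => ((C ^ 2) ^ 2 * Real.exp (-2 * p.1)) * Real.exp (-2 * p.2))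
      ((volume.restrict (Ioi α)).prod (volume.restrict (Ioi α))) :=
    Integrable.mul_prod hmaj1 hmaj2
  have key : Integrable (fun p : ℝ × ℝ => (Lplus A s p.1 p.2) ^ 2)
      ((volume.restrict (Ioi α)).prod (volume.restrict (Ioi α))) := by
    apply hprod.mono' ((hM.pow 2).aestronglyMeasurable)
    filter_upwards with p
    simp only [Pi.pow_apply]
    have h := hLb p.1 p.2
    have hL2 : ‖(Lplus A s p.1 p.2) ^ 2‖ = |Lplus A s p.1 p.2| ^ 2 := by
      rw [Real.norm_eq_abs, abs_pow, sq_abs, ← sq_abs]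
    rw [hL2]
    have h2 : |Lplus A s p.1 p.2| ^ 2 ≤ (C ^ 2 * (Real.exp (-p.1) * Real.exp (-p.2))) ^ 2 :=
      pow_le_pow_left₀ (abs_nonneg _) h 2
    refine h2.trans (le_of_eq ?_)
    rw [show (-2 : ℝ) * p.1 = -p.1 + -p.1 by ring, show (-2 : ℝ) * p.2 = -p.2 + -p.2 by ring,
      Real.exp_add, Real.exp_add]
    ring
  rw [IntegrableOn, Measure.volume_eq_prod, ← Measure.prod_restrict]
  exact key
end

section
/- For every s ≥ 0 and all x, y ∈ ℝ, the sum of the partial derivatives of the kernel entry satisfies ∂ₓ L⁺_s(x,y) + ∂_y L⁺_s(x,y) = s·L⁺_s(x,y) − A(x)·A(y). -/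
open MeasureTheory Real Set

/-- Uniform exponential decay bound on `[0,∞)` shifts, locally uniform in the shift. -/
lemma airy_ball_bound (A : ℝ → ℝ) (C : ℝ) (hC : 0 < C)
    (h1 : ∀ t : ℝ, 0 ≤ t → |A t| ≤ C * Real.exp (-t))
    (h2 : ∀ t : ℝ, t ≤ 0 → |A t| ≤ C * (1 + |t|))
    (u : ℝ) :
    ∀ u' z : ℝ, |u' - u| ≤ 1 → 0 ≤ z →
      |A (u' + z)| ≤ C * (2 + |u|) * Real.exp (1 - u) * Real.exp (-z) := by
  intro u' z hu' hz
  have hu'1 : |u'| ≤ |u| + 1 := by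
    calc |u'| = |(u' - u) + u| := by ring_nf
    _ ≤ |u' - u| + |u| := abs_add_le _ _
    _ ≤ |u| + 1 := by linarith
  have hu'2 : u - 1 ≤ u' := by
    have := abs_le.mp hu'
    linarith [this.1]
  have hexp : Real.exp (-u') ≤ Real.exp (1 - u) := Real.exp_le_exp.mpr (by linarith)
  have step1 : |A (u' + z)| ≤ C * (1 + |u'|) * Real.exp (-u') * Real.exp (-z) := by
    rcases le_or_gt 0 (u' + z) with h | h
    · calc |A (u' + z)| ≤ C * Real.exp (-(u' + z)) := h1 _ h
      _ = C * 1 * Real.exp (-u') * Real.exp (-z) := by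
          rw [neg_add, Real.exp_add]; ring
      _ ≤ C * (1 + |u'|) * Real.exp (-u') * Real.exp (-z) := by
          have hle : C * 1 ≤ C * (1 + |u'|) := by nlinarith [abs_nonneg u']
          exact mul_le_mul_of_nonneg_right
            (mul_le_mul_of_nonneg_right hle (Real.exp_pos _).le) (Real.exp_pos _).le
    · have hle : u' + z ≤ 0 := h.le
      have habs : |u' + z| ≤ |u'| := by
        rw [abs_of_nonpos hle]
        have : -(u' + z) ≤ -u' := by linarith
        linarith [neg_le_abs u']
      have hone : (1:ℝ) ≤ Real.exp (-u') * Real.exp (-z) := by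
        rw [← Real.exp_add]
        exact Real.one_le_exp (by linarith)
      calc |A (u' + z)| ≤ C * (1 + |u' + z|) := h2 _ hle
      _ ≤ C * (1 + |u'|) := by nlinarith
      _ = C * (1 + |u'|) * 1 := by ring
      _ ≤ C * (1 + |u'|) * (Real.exp (-u') * Real.exp (-z)) := by
          have : (0:ℝ) ≤ C * (1 + |u'|) := by nlinarith [abs_nonneg u']
          nlinarith
      _ = C * (1 + |u'|) * Real.exp (-u') * Real.exp (-z) := by ring
  refine step1.trans ?_
  have e1 : (0:ℝ) < Real.exp (-u') := Real.exp_pos _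
  have e2 : (0:ℝ) < Real.exp (-z) := Real.exp_pos _
  have h4 : C * (1 + |u'|) ≤ C * (2 + |u|) := by nlinarith
  exact mul_le_mul_of_nonneg_right
    (mul_le_mul h4 hexp e1.le (by positivity)) e2.le

/-- The basic domination bound for the kernel integrand, locally uniform in the shifts. -/
lemma kernel_bound (f g : ℝ → ℝ) (C : ℝ) (hC : 0 < C)
    (hf1 : ∀ t : ℝ, 0 ≤ t → |f t| ≤ C * Real.exp (-t))
    (hf2 : ∀ t : ℝ, t ≤ 0 → |f t| ≤ C * (1 + |t|))
    (hg1 : ∀ t : ℝ, 0 ≤ t → |g t| ≤ C * Real.exp (-t))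
    (hg2 : ∀ t : ℝ, t ≤ 0 → |g t| ≤ C * (1 + |t|))
    (s : ℝ) (hs : 0 ≤ s) (u v u' v' z : ℝ)
    (hu : |u' - u| ≤ 1) (hv : |v' - v| ≤ 1) (hz : 0 ≤ z) :
    |Real.exp (-(z * s)) * f (u' + z) * g (v' + z)| ≤
      (C * (2 + |u|) * Real.exp (1 - u)) * (C * (2 + |v|) * Real.exp (1 - v))
        * Real.exp (-(2 * z)) := by
  have hbf := airy_ball_bound f C hC hf1 hf2 u u' z hu hz
  have hbg := airy_ball_bound g C hC hg1 hg2 v v' z hv hz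
  have he : Real.exp (-(z * s)) ≤ 1 := Real.exp_le_one_iff.mpr (by nlinarith)
  have he0 : (0:ℝ) ≤ Real.exp (-(z * s)) := (Real.exp_pos _).le
  have hMf : (0:ℝ) ≤ C * (2 + |u|) * Real.exp (1 - u) := by positivity
  have hMg : (0:ℝ) ≤ C * (2 + |v|) * Real.exp (1 - v) := by positivity
  calc |Real.exp (-(z * s)) * f (u' + z) * g (v' + z)|
      = Real.exp (-(z * s)) * |f (u' + z)| * |g (v' + z)| := by
        rw [abs_mul, abs_mul, Real.abs_exp]
    _ ≤ 1 * (C * (2 + |u|) * Real.exp (1 - u) * Real.exp (-z))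
        * (C * (2 + |v|) * Real.exp (1 - v) * Real.exp (-z)) := by
        apply mul_le_mul
        · exact mul_le_mul he hbf (abs_nonneg _) zero_le_one
        · exact hbg
        · exact abs_nonneg _
        · positivity
    _ = (C * (2 + |u|) * Real.exp (1 - u)) * (C * (2 + |v|) * Real.exp (1 - v))
        * (Real.exp (-z) * Real.exp (-z)) := by ring
    _ = (C * (2 + |u|) * Real.exp (1 - u)) * (C * (2 + |v|) * Real.exp (1 - v))
        * Real.exp (-(2 * z)) := by
        rw [← Real.exp_add]; ring_nf

/-- For every `s ≥ 0` and all `x, y ∈ ℝ`,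
`∂ₓ L⁺_s(x,y) + ∂_y L⁺_s(x,y) = s·L⁺_s(x,y) − A(x)·A(y)`. -/
theorem lplus_deriv_sum
    (A : ℝ → ℝ) (hA : ContDiff ℝ 2 A)
    (hAiry : ∀ t : ℝ, deriv (deriv A) t = t * A t)
    (C : ℝ) (hC : 0 < C)
    (hA1 : ∀ t : ℝ, 0 ≤ t → |A t| ≤ C * Real.exp (-t))
    (hA1' : ∀ t : ℝ, 0 ≤ t → |deriv A t| ≤ C * Real.exp (-t))
    (hA2 : ∀ t : ℝ, t ≤ 0 → |A t| ≤ C * (1 + |t|))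
    (hA2' : ∀ t : ℝ, t ≤ 0 → |deriv A t| ≤ C * (1 + |t|))
    (s : ℝ) (hs : 0 ≤ s) (x y : ℝ) :
    deriv (fun x' : ℝ => Lplus A s x' y) x + deriv (fun y' : ℝ => Lplus A s x y') y
      = s * Lplus A s x y - A x * A y := by
  have hAd : Differentiable ℝ A := hA.differentiable two_ne_zero
  have hAc : Continuous A := hA.continuous
  have hA'c : Continuous (deriv A) := hA.continuous_deriv one_le_two
  set μ : Measure ℝ := volume.restrict (Ioi (0:ℝ)) with hμ
  set Bnd : ℝ → ℝ := fun z =>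
    (C * (2 + |x|) * Real.exp (1 - x)) * (C * (2 + |y|) * Real.exp (1 - y))
      * Real.exp (-(2 * z)) with hBnd
  have hBnd_int : Integrable Bnd μ := by
    have h0 : IntegrableOn (fun z : ℝ => Real.exp (-(2 * z))) (Ioi 0) := by
      have := exp_neg_integrableOn_Ioi (0:ℝ) (b := 2) two_pos
      simpa [neg_mul] using this
    exact (h0.const_mul _)
  -- the integrands
  set F : ℝ → ℝ → ℝ := fun x' z => Real.exp (-(z * s)) * A (x' + z) * A (y + z) with hF
  set G : ℝ → ℝ → ℝ := fun y' z => Real.exp (-(z * s)) * A (x + z) * A (y' + z) with hG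
  set F' : ℝ → ℝ → ℝ := fun x' z => Real.exp (-(z * s)) * deriv A (x' + z) * A (y + z) with hF'
  set G' : ℝ → ℝ → ℝ := fun y' z => Real.exp (-(z * s)) * A (x + z) * deriv A (y' + z) with hG'
  have hcontF : ∀ x', Continuous (F x') := by
    intro x'
    exact ((Real.continuous_exp.comp (continuous_id.mul continuous_const).neg).mul
      (hAc.comp (continuous_const.add continuous_id))).mul
      (hAc.comp (continuous_const.add continuous_id))
  have hcontG : ∀ y', Continuous (G y') := by
    intro y'
    exact ((Real.continuous_exp.comp (continuous_id.mul continuous_const).neg).mul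
      (hAc.comp (continuous_const.add continuous_id))).mul
      (hAc.comp (continuous_const.add continuous_id))
  have hcontF' : ∀ x', Continuous (F' x') := by
    intro x'
    exact ((Real.continuous_exp.comp (continuous_id.mul continuous_const).neg).mul
      (hA'c.comp (continuous_const.add continuous_id))).mul
      (hAc.comp (continuous_const.add continuous_id))
  have hcontG' : ∀ y', Continuous (G' y') := by
    intro y'
    exact ((Real.continuous_exp.comp (continuous_id.mul continuous_const).neg).mul
      (hAc.comp (continuous_const.add continuous_id))).mul
      (hA'c.comp (continuous_const.add continuous_id))
  -- integrability of F x
  have hFint : Integrable (F x) μ := by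
    refine (hBnd_int.mono' (hcontF x).aestronglyMeasurable ?_)
    rw [hμ, ae_restrict_iff' measurableSet_Ioi]
    filter_upwards with z hz
    rw [Real.norm_eq_abs]
    exact kernel_bound A A C hC hA1 hA2 hA1 hA2 s hs x y x y z
      (by simp) (by simp) (le_of_lt hz)
  -- derivative in x
  have hdx := hasDerivAt_integral_of_dominated_loc_of_deriv_le
    (F := F) (F' := F') (μ := μ) (x₀ := x) (bound := Bnd) (s := Metric.ball x 1) (Metric.ball_mem_nhds x zero_lt_one)
    (Filter.Eventually.of_forall fun x' => (hcontF x').aestronglyMeasurable)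
    hFint
    ((hcontF' x).aestronglyMeasurable)
    (by
      rw [hμ, ae_restrict_iff' measurableSet_Ioi]
      filter_upwards with z hz x' hx'
      rw [Real.norm_eq_abs]
      have hx'1 : |x' - x| ≤ 1 := by
        rw [Metric.mem_ball, Real.dist_eq] at hx'
        exact hx'.le
      exact kernel_bound (deriv A) A C hC hA1' hA2' hA1 hA2 s hs x y x' y z
        hx'1 (by simp) (le_of_lt hz))
    hBnd_int
    (by
      filter_upwards with z x' _
      have h1 : HasDerivAt (fun x'' : ℝ => A (x'' + z)) (deriv A (x' + z)) x' := by
        simpa [Function.comp_def] using (hAd (x' + z)).hasDerivAt.comp x' ((hasDerivAt_id x').add_const z)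
      simpa [F, F', mul_assoc] using (h1.const_mul (Real.exp (-(z * s)))).mul_const (A (y + z)))
  -- derivative in y
  have hGint : Integrable (G y) μ := by
    refine (hBnd_int.mono' (hcontG y).aestronglyMeasurable ?_)
    rw [hμ, ae_restrict_iff' measurableSet_Ioi]
    filter_upwards with z hz
    rw [Real.norm_eq_abs]
    exact kernel_bound A A C hC hA1 hA2 hA1 hA2 s hs x y x y z
      (by simp) (by simp) (le_of_lt hz)
  have hdy := hasDerivAt_integral_of_dominated_loc_of_deriv_le
    (F := G) (F' := G') (μ := μ) (x₀ := y) (bound := Bnd) (s := Metric.ball y 1) (Metric.ball_mem_nhds y zero_lt_one)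
    (Filter.Eventually.of_forall fun y' => (hcontG y').aestronglyMeasurable)
    hGint
    ((hcontG' y).aestronglyMeasurable)
    (by
      rw [hμ, ae_restrict_iff' measurableSet_Ioi]
      filter_upwards with z hz y' hy'
      rw [Real.norm_eq_abs]
      have hy'1 : |y' - y| ≤ 1 := by
        rw [Metric.mem_ball, Real.dist_eq] at hy'
        exact hy'.le
      exact kernel_bound A (deriv A) C hC hA1 hA2 hA1' hA2' s hs x y x y' z
        (by simp) hy'1 (le_of_lt hz))
    hBnd_int
    (by
      filter_upwards with z y' _
      have h1 : HasDerivAt (fun y'' : ℝ => A (y'' + z)) (deriv A (y' + z)) y' := by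
        simpa [Function.comp_def] using (hAd (y' + z)).hasDerivAt.comp y' ((hasDerivAt_id y').add_const z)
      simpa [G, G', mul_assoc] using (h1.const_mul
        (Real.exp (-(z * s)) * A (x + z))))
  -- rewrite the goal derivatives
  have hDx : deriv (fun x' : ℝ => Lplus A s x' y) x = ∫ z, F' x z ∂μ := by
    apply HasDerivAt.deriv
    exact hdx.2
  have hDy : deriv (fun y' : ℝ => Lplus A s x y') y = ∫ z, G' y z ∂μ := by
    apply HasDerivAt.deriv
    exact hdy.2
  -- integration by parts on (0, ∞)
  set g : ℝ → ℝ := fun z => -(Real.exp (-(z * s)) * A (x + z) * A (y + z)) with hg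
  set g' : ℝ → ℝ := fun z => s * F x z - F' x z - G' y z with hg'
  have hgderiv : ∀ z : ℝ, HasDerivAt g (g' z) z := by
    intro z
    have he : HasDerivAt (fun z' : ℝ => Real.exp (-(z' * s)))
        (-s * Real.exp (-(z * s))) z := by
      have h0 : HasDerivAt (fun z' : ℝ => -(z' * s)) (-s) z := by
        simpa [Pi.neg_def] using ((hasDerivAt_id z).mul_const s).neg
      simpa [mul_comm, Function.comp_def] using (Real.hasDerivAt_exp (-(z * s))).comp z h0
    have ha : HasDerivAt (fun z' : ℝ => A (x + z')) (deriv A (x + z)) z := by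
      simpa [Function.comp_def] using (hAd (x + z)).hasDerivAt.comp z ((hasDerivAt_id z).const_add x)
    have hb : HasDerivAt (fun z' : ℝ => A (y + z')) (deriv A (y + z)) z := by
      simpa [Function.comp_def] using (hAd (y + z)).hasDerivAt.comp z ((hasDerivAt_id z).const_add y)
    have := ((he.mul ha).mul hb).neg
    refine HasDerivAt.congr_deriv this ?_
    simp only [g', F, F', G', hg', Pi.mul_apply]
    ring
  have hg'int : Integrable g' μ := ((hFint.const_mul s).sub hdx.1).sub hdy.1
  have hgtend : Filter.Tendsto g Filter.atTop (nhds 0) := by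
    rw [tendsto_zero_iff_abs_tendsto_zero]
    have hb0 : Filter.Tendsto Bnd Filter.atTop (nhds 0) := by
      have h1 : Filter.Tendsto (fun z : ℝ => Real.exp (-(2 * z)))
          Filter.atTop (nhds 0) := by
        have h2 : Filter.Tendsto (fun z : ℝ => (2:ℝ) * z) Filter.atTop Filter.atTop :=
          Filter.Tendsto.const_mul_atTop two_pos Filter.tendsto_id
        exact Real.tendsto_exp_neg_atTop_nhds_zero.comp h2
      have := h1.const_mul
        ((C * (2 + |x|) * Real.exp (1 - x)) * (C * (2 + |y|) * Real.exp (1 - y)))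
      simpa [hBnd, mul_zero] using this
    apply squeeze_zero' (Filter.Eventually.of_forall fun z => abs_nonneg _) _ hb0
    filter_upwards [Filter.eventually_ge_atTop (0:ℝ)] with z hz
    rw [hg, abs_neg]
    exact kernel_bound A A C hC hA1 hA2 hA1 hA2 s hs x y x y z (by simp) (by simp) hz
  have hIBP : ∫ z in Ioi (0:ℝ), g' z = 0 - g 0 := by
    apply integral_Ioi_of_hasDerivAt_of_tendsto' (fun z _ => hgderiv z) _ hgtend
    exact hg'int
  have hg0 : g 0 = -(A x * A y) := by simp [hg, F]
  -- split the integral of g'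
  have hsplit : ∫ z, g' z ∂μ = s * (∫ z, F x z ∂μ) - (∫ z, F' x z ∂μ) - ∫ z, G' y z ∂μ := by
    have i1 : Integrable (fun z => s * F x z) μ := hFint.const_mul s
    have i2 : Integrable (fun z => s * F x z - F' x z) μ := i1.sub hdx.1
    calc ∫ z, g' z ∂μ
        = (∫ z, (s * F x z - F' x z) ∂μ) - ∫ z, G' y z ∂μ :=
          integral_sub i2 hdy.1
      _ = ((∫ z, s * F x z ∂μ) - ∫ z, F' x z ∂μ) - ∫ z, G' y z ∂μ := by
          rw [integral_sub i1 hdx.1]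
      _ = s * (∫ z, F x z ∂μ) - (∫ z, F' x z ∂μ) - ∫ z, G' y z ∂μ := by
          rw [integral_const_mul]
  have hL : Lplus A s x y = ∫ z, F x z ∂μ := rfl
  have hμeq : ∫ z, g' z ∂μ = ∫ z in Ioi (0:ℝ), g' z := rfl
  rw [hDx, hDy, hL]
  have := hIBP
  rw [← hμeq, hsplit, hg0] at this
  linarith
end

section
/- For every s ≥ 0 and all x, y ∈ ℝ, the kernel entry L⁺_s is twice differentiable in each variable and satisfies ∂ₓ² L⁺_s(x,y) − x·L⁺_s(x,y) = ∫₀^∞ z·e^{−z·s}·A(x+z)·A(y+z) dz = ∂_y² L⁺_s(x,y) − y·L⁺_s(x,y); in particular the 'Airy operator' d²/dx² − x applied in the first variable agrees with d²/dy² − y applied in the second variable (the kernel-level statement that D² − M commutes with L). -/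
open MeasureTheory Real Set

lemma exp_half_integrable (c : ℝ) :
    IntegrableOn (fun z : ℝ => c * Real.exp (-(1/2 : ℝ) * z)) (Set.Ioi (0:ℝ)) :=
  (exp_neg_integrableOn_Ioi 0 (by norm_num)).const_mul c

lemma mul_exp_quarter_le (z : ℝ) (hz : 0 ≤ z) : z * Real.exp (-(z/4)) ≤ 4 := by
  have h1 : z/4 + 1 ≤ Real.exp (z/4) := Real.add_one_le_exp _
  have h2 : Real.exp (-(z/4)) * Real.exp (z/4) = 1 := by
    rw [← Real.exp_add]; simp
  have h3 : (0:ℝ) < Real.exp (-(z/4)) := Real.exp_pos _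
  nlinarith [mul_le_mul_of_nonneg_left h1 h3.le]

/-- Transfer a global bound `|g t| ≤ c e^{-t/2}` to a bound on the shifted
function, uniform on a ball. -/
lemma shift_bound (g : ℝ → ℝ) (c : ℝ) (hg : ∀ t, |g t| ≤ c * Real.exp (-(t/2)))
    (x₀ : ℝ) :
    ∀ x ∈ Metric.ball x₀ (1:ℝ), ∀ z, 0 < z →
      |g (x+z)| ≤ (c * Real.exp ((|x₀|+1)/2)) * Real.exp (-(z/4)) := by
  intro x hx z hz
  have hc : 0 ≤ c := by
    have := (abs_nonneg (g 0)).trans (hg 0)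
    nlinarith [Real.exp_pos (-(0:ℝ)/2)]
  have hx' : -x ≤ |x₀| + 1 := by
    rw [Metric.mem_ball, Real.dist_eq] at hx
    have h := abs_lt.1 hx
    have := neg_abs_le x₀
    linarith [h.1]
  calc |g (x+z)| ≤ c * Real.exp (-((x+z)/2)) := hg _
    _ ≤ (c * Real.exp ((|x₀|+1)/2)) * Real.exp (-(z/4)) := by
        rw [mul_assoc, ← Real.exp_add]
        exact mul_le_mul_of_nonneg_left (Real.exp_le_exp.2 (by linarith)) hc

/-- Same for a bound of the form `|g t| ≤ c |t| e^{-t/2}`. -/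
lemma shift_bound2 (g : ℝ → ℝ) (c : ℝ) (hc : 0 ≤ c)
    (hg : ∀ t, |g t| ≤ (c * |t|) * Real.exp (-(t/2))) (x₀ : ℝ) :
    ∀ x ∈ Metric.ball x₀ (1:ℝ), ∀ z, 0 < z →
      |g (x+z)| ≤ ((c * (|x₀|+5)) * Real.exp ((|x₀|+1)/2)) * Real.exp (-(z/4)) := by
  intro x hx z hz
  have hx' : -x ≤ |x₀| + 1 ∧ |x| ≤ |x₀| + 1 := by
    rw [Metric.mem_ball, Real.dist_eq] at hx
    have h := abs_lt.1 hx
    constructor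
    · have := neg_abs_le x₀; linarith [h.1]
    · have := le_abs_self x₀; have := neg_abs_le x₀
      rw [abs_le]; constructor <;> linarith [h.1, h.2]
  have h1 : |g (x+z)| ≤ (c * (|x₀|+1+z)) * Real.exp (-((x+z)/2)) := by
    refine (hg _).trans ?_
    have : |x+z| ≤ |x₀|+1+z := by
      refine (abs_add_le _ _).trans ?_
      have : |z| = z := abs_of_pos hz
      linarith [hx'.2, this.le]
    exact mul_le_mul_of_nonneg_right
      (mul_le_mul_of_nonneg_left this hc) (Real.exp_pos _).le
  have h2 : Real.exp (-((x+z)/2)) ≤ Real.exp ((|x₀|+1)/2) * Real.exp (-(z/2)) := by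
    rw [← Real.exp_add]
    exact Real.exp_le_exp.2 (by linarith [hx'.1])
  have h3 : (|x₀|+1+z) * Real.exp (-(z/2)) ≤ (|x₀|+5) * Real.exp (-(z/4)) := by
    have he : Real.exp (-(z/2)) = Real.exp (-(z/4)) * Real.exp (-(z/4)) := by
      rw [← Real.exp_add]; ring_nf
    have hq : Real.exp (-(z/4)) ≤ 1 := Real.exp_le_one_iff.2 (by linarith)
    have hzq := mul_exp_quarter_le z hz.le
    have hp : (0:ℝ) < Real.exp (-(z/4)) := Real.exp_pos _
    have hx0 : (0:ℝ) ≤ |x₀| + 1 := by positivity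
    calc (|x₀|+1+z) * Real.exp (-(z/2))
        = ((|x₀|+1) * Real.exp (-(z/4)) + z * Real.exp (-(z/4))) * Real.exp (-(z/4)) := by
          rw [he]; ring
      _ ≤ ((|x₀|+1) * 1 + 4) * Real.exp (-(z/4)) := by
          apply mul_le_mul_of_nonneg_right _ hp.le
          have := mul_le_mul_of_nonneg_left hq hx0
          linarith
      _ = (|x₀|+5) * Real.exp (-(z/4)) := by ring
  have hzp : (0:ℝ) ≤ Real.exp (-(z/4)) := (Real.exp_pos _).le
  calc |g (x+z)| ≤ (c * (|x₀|+1+z)) * Real.exp (-((x+z)/2)) := h1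
    _ ≤ (c * (|x₀|+1+z)) * (Real.exp ((|x₀|+1)/2) * Real.exp (-(z/2))) := by
        apply mul_le_mul_of_nonneg_left h2
        positivity
    _ = (c * Real.exp ((|x₀|+1)/2)) * ((|x₀|+1+z) * Real.exp (-(z/2))) := by ring
    _ ≤ (c * Real.exp ((|x₀|+1)/2)) * ((|x₀|+5) * Real.exp (-(z/4))) := by
        apply mul_le_mul_of_nonneg_left h3; positivity
    _ = ((c * (|x₀|+5)) * Real.exp ((|x₀|+1)/2)) * Real.exp (-(z/4)) := by ring

/-- Differentiation under the integral sign for kernels of the form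
`x ↦ ∫_{z>0} w(z) f(x+z)`. -/
lemma hasDerivAt_kernel (w f f' : ℝ → ℝ) (hw : Continuous w) (hf : Continuous f)
    (hf' : Continuous f') (hd : ∀ t, HasDerivAt f (f' t) t)
    (Dw Df Df' : ℝ) (x₀ : ℝ)
    (hwB : ∀ z, 0 < z → |w z| ≤ Dw * Real.exp (-(z/4)))
    (hfB : ∀ x ∈ Metric.ball x₀ (1:ℝ), ∀ z, 0 < z → |f (x+z)| ≤ Df * Real.exp (-(z/4)))
    (hf'B : ∀ x ∈ Metric.ball x₀ (1:ℝ), ∀ z, 0 < z → |f' (x+z)| ≤ Df' * Real.exp (-(z/4))) :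
    IntegrableOn (fun z => w z * f' (x₀+z)) (Set.Ioi (0:ℝ)) ∧
    HasDerivAt (fun x => ∫ z in Set.Ioi (0:ℝ), w z * f (x+z))
      (∫ z in Set.Ioi (0:ℝ), w z * f' (x₀+z)) x₀ := by
  have hDw : 0 ≤ Dw := by
    have := (abs_nonneg (w 1)).trans (hwB 1 one_pos)
    nlinarith [Real.exp_pos (-((1:ℝ)/4))]
  have hx₀ : x₀ ∈ Metric.ball x₀ (1:ℝ) := Metric.mem_ball_self one_pos
  have hexp : ∀ z : ℝ, Real.exp (-(z/4)) * Real.exp (-(z/4)) = Real.exp (-(1/2:ℝ)*z) := by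
    intro z; rw [← Real.exp_add]; congr 1; ring
  have hmeas : ∀ g : ℝ → ℝ, Continuous g → ∀ x : ℝ,
      AEStronglyMeasurable (fun z => w z * g (x+z)) (volume.restrict (Ioi 0)) := by
    intro g hg x
    exact ((hw.mul (hg.comp (continuous_const.add continuous_id))).aestronglyMeasurable)
  have key : ∀ (g : ℝ → ℝ), Continuous g →
      (∀ x ∈ Metric.ball x₀ (1:ℝ), ∀ z, 0 < z → |g (x+z)| ≤ Df' * Real.exp (-(z/4))) →
      ∀ x ∈ Metric.ball x₀ (1:ℝ),
      Integrable (fun z => w z * g (x+z)) (volume.restrict (Ioi 0)) := by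
    intro g hg hgB x hx
    refine Integrable.mono' (exp_half_integrable (Dw * Df')) (hmeas g hg x) ?_
    refine (ae_restrict_iff' measurableSet_Ioi).2 (Filter.Eventually.of_forall fun z hz => ?_)
    have h1 := hwB z hz
    have h2 := hgB x hx z hz
    calc ‖w z * g (x+z)‖ = |w z| * |g (x+z)| := by
          rw [Real.norm_eq_abs, abs_mul]
      _ ≤ (Dw * Real.exp (-(z/4))) * (Df' * Real.exp (-(z/4))) :=
          mul_le_mul h1 h2 (abs_nonneg _) (by positivity)
      _ = Dw * Df' * (Real.exp (-(z/4)) * Real.exp (-(z/4))) := by ring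
      _ = Dw * Df' * Real.exp (-(1/2:ℝ)*z) := by rw [hexp]
  have hFint : Integrable (fun z => w z * f (x₀+z)) (volume.restrict (Ioi 0)) := by
    refine Integrable.mono' (exp_half_integrable (Dw * Df)) (hmeas f hf x₀) ?_
    refine (ae_restrict_iff' measurableSet_Ioi).2 (Filter.Eventually.of_forall fun z hz => ?_)
    calc ‖w z * f (x₀+z)‖ = |w z| * |f (x₀+z)| := by rw [Real.norm_eq_abs, abs_mul]
      _ ≤ (Dw * Real.exp (-(z/4))) * (Df * Real.exp (-(z/4))) :=
          mul_le_mul (hwB z hz) (hfB x₀ hx₀ z hz) (abs_nonneg _) (by positivity)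
      _ = Dw * Df * (Real.exp (-(z/4)) * Real.exp (-(z/4))) := by ring
      _ = Dw * Df * Real.exp (-(1/2:ℝ)*z) := by rw [hexp]
  refine hasDerivAt_integral_of_dominated_loc_of_deriv_le
    (F := fun x z => w z * f (x+z)) (F' := fun x z => w z * f' (x+z))
    (bound := fun z => Dw * Df' * Real.exp (-(1/2:ℝ)*z))
    (Metric.ball_mem_nhds x₀ one_pos) (Filter.Eventually.of_forall fun x => hmeas f hf x) hFint
    (hmeas f' hf' x₀) ?_ (exp_half_integrable _) ?_
  · refine (ae_restrict_iff' measurableSet_Ioi).2 (Filter.Eventually.of_forall fun z hz => ?_)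
    intro x hx
    calc ‖w z * f' (x+z)‖ = |w z| * |f' (x+z)| := by rw [Real.norm_eq_abs, abs_mul]
      _ ≤ (Dw * Real.exp (-(z/4))) * (Df' * Real.exp (-(z/4))) :=
          mul_le_mul (hwB z hz) (hf'B x hx z hz) (abs_nonneg _) (by positivity)
      _ = Dw * Df' * (Real.exp (-(z/4)) * Real.exp (-(z/4))) := by ring
      _ = Dw * Df' * Real.exp (-(1/2:ℝ)*z) := by rw [hexp]
  · refine Filter.Eventually.of_forall fun z => fun x _ => ?_
    have h := ((hd (x+z)).comp x ((hasDerivAt_id x).add_const z)).const_mul (w z)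
    simpa using h

/-- The one-variable computation behind the main theorem. -/
lemma one_var (A : ℝ → ℝ) (hA : ContDiff ℝ 2 A)
    (hAiry : ∀ t : ℝ, deriv (deriv A) t = t * A t)
    (C : ℝ) (hC : 0 < C)
    (hA1 : ∀ t : ℝ, 0 ≤ t → |A t| ≤ C * Real.exp (-t))
    (hA1' : ∀ t : ℝ, 0 ≤ t → |deriv A t| ≤ C * Real.exp (-t))
    (hA2 : ∀ t : ℝ, t ≤ 0 → |A t| ≤ C * (1 + |t|))
    (hA2' : ∀ t : ℝ, t ≤ 0 → |deriv A t| ≤ C * (1 + |t|))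
    (s : ℝ) (hs : 0 ≤ s) (x y : ℝ) :
    DifferentiableAt ℝ (fun x' : ℝ => Lplus A s x' y) x ∧
    DifferentiableAt ℝ (deriv (fun x' : ℝ => Lplus A s x' y)) x ∧
    deriv (deriv (fun x' : ℝ => Lplus A s x' y)) x - x * Lplus A s x y
      = ∫ z in Set.Ioi (0 : ℝ), z * Real.exp (-(z * s)) * A (x + z) * A (y + z) := by
  have hAc : Continuous A := hA.continuous
  have hA'c : Continuous (deriv A) := hA.continuous_deriv one_le_two
  have hA''eq : deriv (deriv A) = fun t => t * A t := funext hAiry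
  have hA''c : Continuous (deriv (deriv A)) := by
    rw [hA''eq]; exact continuous_id.mul hAc
  have hdA : ∀ t, HasDerivAt A (deriv A t) t :=
    fun t => (hA.differentiable (by norm_num) t).hasDerivAt
  have hdA' : ∀ t, HasDerivAt (deriv A) (deriv (deriv A) t) t := by
    have h := (contDiff_succ_iff_deriv (n := 1)).mp (by norm_num [hA] : ContDiff ℝ (1+1) A)
    exact fun t => (h.2.2.differentiable (by norm_num) t).hasDerivAt
  -- global exponential-type bounds
  have hmono : ∀ (g : ℝ → ℝ), (∀ t, 0 ≤ t → |g t| ≤ C * Real.exp (-t)) →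
      (∀ t, t ≤ 0 → |g t| ≤ C * (1 + |t|)) →
      ∀ t, |g t| ≤ (2*C) * Real.exp (-(t/2)) := by
    intro g h1 h2 t
    rcases le_or_gt 0 t with ht | ht
    · have he : Real.exp (-t) ≤ Real.exp (-(t/2)) := Real.exp_le_exp.2 (by linarith)
      have := h1 t ht
      nlinarith [Real.exp_pos (-(t/2))]
    · have := h2 t ht.le
      rw [abs_of_neg ht] at this
      have he : -(t/2) + 1 ≤ Real.exp (-(t/2)) := Real.add_one_le_exp _
      nlinarith
  have habs : ∀ t, |A t| ≤ (2*C) * Real.exp (-(t/2)) := hmono A hA1 hA2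
  have habs' : ∀ t, |deriv A t| ≤ (2*C) * Real.exp (-(t/2)) := hmono (deriv A) hA1' hA2'
  have habs'' : ∀ t, |deriv (deriv A) t| ≤ ((2*C) * |t|) * Real.exp (-(t/2)) := by
    intro t
    rw [hAiry, abs_mul]
    have := habs t
    calc |t| * |A t| ≤ |t| * ((2*C) * Real.exp (-(t/2))) :=
          mul_le_mul_of_nonneg_left this (abs_nonneg t)
      _ = ((2*C) * |t|) * Real.exp (-(t/2)) := by ring
  -- the weight
  have hwc : Continuous (fun z : ℝ => Real.exp (-(z*s)) * A (y+z)) :=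
    (Real.continuous_exp.comp (continuous_id.mul continuous_const).neg).mul
      (hAc.comp (continuous_const.add continuous_id))
  have hwB : ∀ z, 0 < z → |Real.exp (-(z*s)) * A (y+z)| ≤
      ((2*C) * Real.exp ((|y|+1)/2)) * Real.exp (-(z/4)) := by
    intro z hz
    have h1 : Real.exp (-(z*s)) ≤ 1 := Real.exp_le_one_iff.2 (by nlinarith)
    have h2 := shift_bound A (2*C) habs y y (Metric.mem_ball_self one_pos) z hz
    calc |Real.exp (-(z*s)) * A (y+z)| = Real.exp (-(z*s)) * |A (y+z)| := by
          rw [abs_mul, abs_of_pos (Real.exp_pos _)]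
      _ ≤ 1 * (((2*C) * Real.exp ((|y|+1)/2)) * Real.exp (-(z/4))) := by
          apply mul_le_mul h1 h2 (abs_nonneg _) one_pos.le
      _ = ((2*C) * Real.exp ((|y|+1)/2)) * Real.exp (-(z/4)) := one_mul _
  -- rewrite Lplus
  have hLp : ∀ x' : ℝ, Lplus A s x' y
      = ∫ z in Set.Ioi (0:ℝ), (Real.exp (-(z*s)) * A (y+z)) * A (x'+z) := by
    intro x'
    exact setIntegral_congr_fun measurableSet_Ioi fun z _ => by ring
  have hL : (fun x' : ℝ => Lplus A s x' y)
      = fun x' => ∫ z in Set.Ioi (0:ℝ), (Real.exp (-(z*s)) * A (y+z)) * A (x'+z) :=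
    funext hLp
  -- first derivative at every point
  have H1 : ∀ x₁ : ℝ,
      HasDerivAt (fun x' => ∫ z in Set.Ioi (0:ℝ), (Real.exp (-(z*s)) * A (y+z)) * A (x'+z))
        (∫ z in Set.Ioi (0:ℝ), (Real.exp (-(z*s)) * A (y+z)) * deriv A (x₁+z)) x₁ := by
    intro x₁
    exact (hasDerivAt_kernel _ A (deriv A) hwc hAc hA'c hdA
      ((2*C) * Real.exp ((|y|+1)/2)) ((2*C) * Real.exp ((|x₁|+1)/2))
      ((2*C) * Real.exp ((|x₁|+1)/2)) x₁ hwB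
      (shift_bound A (2*C) habs x₁) (shift_bound (deriv A) (2*C) habs' x₁)).2
  have hG : deriv (fun x' : ℝ => Lplus A s x' y)
      = fun x₁ => ∫ z in Set.Ioi (0:ℝ), (Real.exp (-(z*s)) * A (y+z)) * deriv A (x₁+z) := by
    funext x₁
    rw [hL]
    exact (H1 x₁).deriv
  -- second derivative at every point
  have H2 : ∀ x₁ : ℝ,
      IntegrableOn (fun z => (Real.exp (-(z*s)) * A (y+z)) * deriv (deriv A) (x₁+z)) (Set.Ioi (0:ℝ)) ∧
      HasDerivAt (fun x' => ∫ z in Set.Ioi (0:ℝ), (Real.exp (-(z*s)) * A (y+z)) * deriv A (x'+z))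
        (∫ z in Set.Ioi (0:ℝ), (Real.exp (-(z*s)) * A (y+z)) * deriv (deriv A) (x₁+z)) x₁ := by
    intro x₁
    exact hasDerivAt_kernel _ (deriv A) (deriv (deriv A)) hwc hA'c hA''c hdA'
      ((2*C) * Real.exp ((|y|+1)/2)) ((2*C) * Real.exp ((|x₁|+1)/2))
      (((2*C) * (|x₁|+5)) * Real.exp ((|x₁|+1)/2)) x₁ hwB
      (shift_bound (deriv A) (2*C) habs' x₁)
      (shift_bound2 (deriv (deriv A)) (2*C) (by positivity) habs'' x₁)
  refine ⟨?_, ?_, ?_⟩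
  · rw [hL]; exact (H1 x).differentiableAt
  · rw [hG]; exact (H2 x).2.differentiableAt
  · have hdd : deriv (deriv (fun x' : ℝ => Lplus A s x' y)) x
        = ∫ z in Set.Ioi (0:ℝ), (Real.exp (-(z*s)) * A (y+z)) * deriv (deriv A) (x+z) := by
      rw [hG]; exact (H2 x).2.deriv
    have hint0 : IntegrableOn (fun z => (Real.exp (-(z*s)) * A (y+z)) * A (x+z)) (Set.Ioi (0:ℝ)) := by
      have hexp : ∀ z : ℝ, Real.exp (-(z/4)) * Real.exp (-(z/4)) = Real.exp (-(1/2:ℝ)*z) := by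
        intro z; rw [← Real.exp_add]; congr 1; ring
      refine Integrable.mono'
        (exp_half_integrable (((2*C) * Real.exp ((|y|+1)/2)) * ((2*C) * Real.exp ((|x|+1)/2))))
        ((hwc.mul (hAc.comp (continuous_const.add continuous_id))).aestronglyMeasurable) ?_
      refine (ae_restrict_iff' measurableSet_Ioi).2 (Filter.Eventually.of_forall fun z hz => ?_)
      calc ‖(Real.exp (-(z*s)) * A (y+z)) * A (x+z)‖
          = |Real.exp (-(z*s)) * A (y+z)| * |A (x+z)| := by rw [Real.norm_eq_abs, abs_mul]
        _ ≤ (((2*C) * Real.exp ((|y|+1)/2)) * Real.exp (-(z/4)))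
              * (((2*C) * Real.exp ((|x|+1)/2)) * Real.exp (-(z/4))) :=
            mul_le_mul (hwB z hz)
              (shift_bound A (2*C) habs x x (Metric.mem_ball_self one_pos) z hz)
              (abs_nonneg _) (by positivity)
        _ = (((2*C) * Real.exp ((|y|+1)/2)) * ((2*C) * Real.exp ((|x|+1)/2)))
              * (Real.exp (-(z/4)) * Real.exp (-(z/4))) := by ring
        _ = _ := by rw [hexp]
    rw [hdd, hLp x, ← integral_const_mul, ← integral_sub (H2 x).1 (hint0.const_mul x)]
    refine setIntegral_congr_fun measurableSet_Ioi fun z hz => ?_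
    rw [hAiry]
    ring

/-- For every `s ≥ 0` and all `x, y ∈ ℝ`, `L⁺_s` is twice differentiable in each
variable and satisfies
`∂ₓ² L⁺_s(x,y) − x·L⁺_s(x,y) = ∫₀^∞ z·e^{−z·s}·A(x+z)·A(y+z) dz
  = ∂_y² L⁺_s(x,y) − y·L⁺_s(x,y)`;
in particular the Airy operator `d²/dx² − x` in the first variable agrees with
`d²/dy² − y` in the second variable (`D² − M` commutes with `L`). -/
theorem lplus_airy_operator_symm
    (A : ℝ → ℝ) (hA : ContDiff ℝ 2 A)
    (hAiry : ∀ t : ℝ, deriv (deriv A) t = t * A t)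
    (C : ℝ) (hC : 0 < C)
    (hA1 : ∀ t : ℝ, 0 ≤ t → |A t| ≤ C * Real.exp (-t))
    (hA1' : ∀ t : ℝ, 0 ≤ t → |deriv A t| ≤ C * Real.exp (-t))
    (hA2 : ∀ t : ℝ, t ≤ 0 → |A t| ≤ C * (1 + |t|))
    (hA2' : ∀ t : ℝ, t ≤ 0 → |deriv A t| ≤ C * (1 + |t|))
    (s : ℝ) (hs : 0 ≤ s) (x y : ℝ) :
    DifferentiableAt ℝ (fun x' : ℝ => Lplus A s x' y) x ∧
    DifferentiableAt ℝ (deriv (fun x' : ℝ => Lplus A s x' y)) x ∧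
    DifferentiableAt ℝ (fun y' : ℝ => Lplus A s x y') y ∧
    DifferentiableAt ℝ (deriv (fun y' : ℝ => Lplus A s x y')) y ∧
    deriv (deriv (fun x' : ℝ => Lplus A s x' y)) x - x * Lplus A s x y
      = ∫ z in Set.Ioi (0 : ℝ), z * Real.exp (-(z * s)) * A (x + z) * A (y + z) ∧
    (∫ z in Set.Ioi (0 : ℝ), z * Real.exp (-(z * s)) * A (x + z) * A (y + z))
      = deriv (deriv (fun y' : ℝ => Lplus A s x y')) y - y * Lplus A s x y := by
  obtain ⟨d1, d2, e1⟩ := one_var A hA hAiry C hC hA1 hA1' hA2 hA2' s hs x y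
  obtain ⟨d3, d4, e2⟩ := one_var A hA hAiry C hC hA1 hA1' hA2 hA2' s hs y x
  have hswap : (fun y' : ℝ => Lplus A s x y') = fun y' : ℝ => Lplus A s y' x := by
    funext y'
    exact setIntegral_congr_fun measurableSet_Ioi fun z _ => by ring
  have hswap2 : Lplus A s x y = Lplus A s y x :=
    setIntegral_congr_fun measurableSet_Ioi fun z _ => by ring
  have hint : (∫ z in Set.Ioi (0 : ℝ), z * Real.exp (-(z * s)) * A (y + z) * A (x + z))
      = ∫ z in Set.Ioi (0 : ℝ), z * Real.exp (-(z * s)) * A (x + z) * A (y + z) :=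
    setIntegral_congr_fun measurableSet_Ioi fun z _ => by ring
  refine ⟨d1, d2, by rw [hswap]; exact d3, by rw [hswap]; exact d4, e1, ?_⟩
  rw [hswap, hswap2, ← hint]
  exact e2.symm
end

section
/- For every s < 0 and all x, y ∈ ℝ, the sum of the partial derivatives of the kernel entry satisfies ∂ₓ L⁻_s(x,y) + ∂_y L⁻_s(x,y) = s·L⁻_s(x,y) − A(x)·A(y) (the same first-order identity as in the case s ≥ 0). -/
open MeasureTheory Real Set Filter Topology

/-- `L⁻_s(x,y) = −∫_{−∞}^0 e^{−z·s}·A(x+z)·A(y+z) dz`, the extended Airy kernel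
entry for `s = τ_i − τ_j < 0`. -/
noncomputable def Lminus (A : ℝ → ℝ) (s x y : ℝ) : ℝ :=
  -∫ z in Set.Iio (0 : ℝ), Real.exp (-(z * s)) * A (x + z) * A (y + z)

private lemma intExpAux {c : ℝ} (hc : 0 < c) :
    MeasureTheory.IntegrableOn (fun z : ℝ => Real.exp (z * c)) (Set.Iic (0 : ℝ)) := by
  rw [IntegrableOn, ← Measure.map_neg_eq_self (volume : Measure ℝ)]
  have m : MeasurableEmbedding fun x : ℝ => -x :=
    (Homeomorph.neg ℝ).measurableEmbedding
  rw [← IntegrableOn, MeasurableEmbedding.integrableOn_map_iff m]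
  simp_rw [Function.comp_def, neg_preimage, neg_Iic, neg_zero]
  apply Iff.mpr integrableOn_Ici_iff_integrableOn_Ioi
  exact (exp_neg_integrableOn_Ioi 0 hc).congr_fun
    (fun z _ => by show Real.exp (-c * z) = Real.exp (-z * c); congr 1; ring) measurableSet_Ioi

private lemma linLeExp {r w : ℝ} (hr : 0 < r) (hw : 0 ≤ w) :
    1 + w ≤ (1 + 1 / r) * Real.exp (r * w) := by
  have h1 : r * w + 1 ≤ Real.exp (r * w) := Real.add_one_le_exp _
  have h2 : (0 : ℝ) < 1 + 1 / r := by positivity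
  have h3 : (1 + 1 / r) * (r * w + 1) ≤ (1 + 1 / r) * Real.exp (r * w) :=
    mul_le_mul_of_nonneg_left h1 h2.le
  have h4 : (1 / r) * r = 1 := one_div_mul_cancel hr.ne'
  nlinarith [mul_nonneg hr.le hw, mul_nonneg (mul_nonneg (one_div_nonneg.mpr hr.le) hr.le) hw]

/-- For every `s < 0` and all `x, y ∈ ℝ`,
`∂ₓ L⁻_s(x,y) + ∂_y L⁻_s(x,y) = s·L⁻_s(x,y) − A(x)·A(y)`
(the same first-order identity as in the case `s ≥ 0`). -/
theorem lminus_deriv_sum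
    (A : ℝ → ℝ) (hA : ContDiff ℝ 2 A)
    (hAiry : ∀ t : ℝ, deriv (deriv A) t = t * A t)
    (C : ℝ) (hC : 0 < C)
    (hA1 : ∀ t : ℝ, 0 ≤ t → |A t| ≤ C * Real.exp (-t))
    (hA1' : ∀ t : ℝ, 0 ≤ t → |deriv A t| ≤ C * Real.exp (-t))
    (hA2 : ∀ t : ℝ, t ≤ 0 → |A t| ≤ C * (1 + |t|))
    (hA2' : ∀ t : ℝ, t ≤ 0 → |deriv A t| ≤ C * (1 + |t|))
    (s : ℝ) (hs : s < 0) (x y : ℝ) :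
    deriv (fun x' : ℝ => Lminus A s x' y) x + deriv (fun y' : ℝ => Lminus A s x y') y
      = s * Lminus A s x y - A x * A y := by
  have hσ : (0 : ℝ) < -s := by linarith
  have hAc : Continuous A := hA.continuous
  have hA'c : Continuous (deriv A) := hA.continuous_deriv one_le_two
  have hAd : Differentiable ℝ A := hA.differentiable two_ne_zero
  -- global linear bounds
  have hglob : ∀ (B : ℝ → ℝ), (∀ t, 0 ≤ t → |B t| ≤ C * Real.exp (-t)) →
      (∀ t, t ≤ 0 → |B t| ≤ C * (1 + |t|)) → ∀ t, |B t| ≤ C * (1 + |t|) := by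
    intro B h1 h2 t
    rcases le_or_gt t 0 with h | h
    · exact h2 t h
    · refine (h1 t h.le).trans ?_
      have he : Real.exp (-t) ≤ 1 := Real.exp_le_one_iff.mpr (by linarith)
      nlinarith [abs_nonneg t]
  have hAg : ∀ t, |A t| ≤ C * (1 + |t|) := hglob A hA1 hA2
  have hA'g : ∀ t, |deriv A t| ≤ C * (1 + |t|) := hglob (deriv A) hA1' hA2'
  -- the dominating function
  set X : ℝ := 2 + |x| + |y| with hX
  have hX1 : (1 : ℝ) ≤ X := by
    have := abs_nonneg x; have := abs_nonneg y; simp only [hX]; linarith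
  set K : ℝ := (C * X * (1 + 4 / (-s))) ^ 2 with hK
  set bnd : ℝ → ℝ := fun z => K * Real.exp (z * (-s / 2)) with hbnd
  -- key pointwise bound
  have hfac : ∀ (h : ℝ → ℝ), (∀ t, |h t| ≤ C * (1 + |t|)) → ∀ w z : ℝ, z ≤ 0 →
      |w| ≤ |x| + |y| + 1 →
      |h (w + z)| ≤ C * X * (1 + 4 / (-s)) * Real.exp ((-s / 4) * (-z)) := by
    intro h hh w z hz hw
    have h1 : |h (w + z)| ≤ C * (1 + |w + z|) := hh _
    have h2 : 1 + |w + z| ≤ X * (1 + |z|) := by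
      have hwz : |w + z| ≤ |w| + |z| := abs_add_le w z
      have hz0 : 0 ≤ |z| := abs_nonneg z
      nlinarith
    have h3 : 1 + |z| ≤ (1 + 4 / (-s)) * Real.exp ((-s / 4) * |z|) := by
      have := linLeExp (r := -s / 4) (w := |z|) (by linarith) (abs_nonneg z)
      have h4 : 1 / (-s / 4) = 4 / (-s) := one_div_div (-s) 4
      rw [h4] at this; exact this
    have main : |h (w + z)| ≤ C * X * (1 + 4 / (-s)) * Real.exp ((-s / 4) * |z|) := by
      calc |h (w + z)| ≤ C * (1 + |w + z|) := h1
        _ ≤ C * (X * (1 + |z|)) := mul_le_mul_of_nonneg_left h2 hC.le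
        _ ≤ C * (X * ((1 + 4 / (-s)) * Real.exp ((-s / 4) * |z|))) := by
            have hX0 : (0 : ℝ) ≤ X := by linarith
            exact mul_le_mul_of_nonneg_left (mul_le_mul_of_nonneg_left h3 hX0) hC.le
        _ = C * X * (1 + 4 / (-s)) * Real.exp ((-s / 4) * |z|) := by ring
    rwa [abs_of_nonpos hz] at main
  have hbd : ∀ (f g : ℝ → ℝ), (∀ t, |f t| ≤ C * (1 + |t|)) → (∀ t, |g t| ≤ C * (1 + |t|)) →
      ∀ u v z : ℝ, z ≤ 0 → |u| ≤ |x| + |y| + 1 → |v| ≤ |x| + |y| + 1 →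
      |Real.exp (-(z * s)) * f (u + z) * g (v + z)| ≤ bnd z := by
    intro f g hf hg u v z hz hu hv
    have e1 := hfac f hf u z hz hu
    have e2 := hfac g hg v z hz hv
    have hE : (0 : ℝ) ≤ Real.exp ((-s / 4) * (-z)) := (Real.exp_pos _).le
    have hF : (0 : ℝ) ≤ C * X * (1 + 4 / (-s)) := by positivity
    calc |Real.exp (-(z * s)) * f (u + z) * g (v + z)|
        = Real.exp (-(z * s)) * |f (u + z)| * |g (v + z)| := by
          rw [abs_mul, abs_mul, Real.abs_exp]
      _ ≤ Real.exp (-(z * s)) * (C * X * (1 + 4 / (-s)) * Real.exp ((-s / 4) * (-z)))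
            * (C * X * (1 + 4 / (-s)) * Real.exp ((-s / 4) * (-z))) := by
          have := (Real.exp_pos (-(z * s))).le
          gcongr
      _ = K * (Real.exp (-(z * s)) * Real.exp ((-s / 4) * (-z)) * Real.exp ((-s / 4) * (-z))) := by
          rw [hK]; ring
      _ = bnd z := by
          rw [hbnd, ← Real.exp_add, ← Real.exp_add]
          congr 1
          ring
  -- integrability of the dominating function
  have hbintIic : IntegrableOn bnd (Iic (0 : ℝ)) := by
    exact (intExpAux (by linarith : (0:ℝ) < -s / 2)).const_mul K
  have hbintIio : IntegrableOn bnd (Iio (0 : ℝ)) :=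
    hbintIic.mono_set Iio_subset_Iic_self
  -- integrability of all integrands
  have hP : ∀ (f g : ℝ → ℝ), Continuous f → Continuous g →
      (∀ t, |f t| ≤ C * (1 + |t|)) → (∀ t, |g t| ≤ C * (1 + |t|)) →
      IntegrableOn (fun z => Real.exp (-(z * s)) * f (x + z) * g (y + z)) (Iic (0 : ℝ)) := by
    intro f g hfc hgc hf hg
    apply hbintIic.mono' ((((Real.continuous_exp.comp (by fun_prop)).mul
      (hfc.comp (by fun_prop))).mul (hgc.comp (by fun_prop))).aestronglyMeasurable)
    refine (ae_restrict_iff' measurableSet_Iic).mpr (ae_of_all _ fun z hz => ?_)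
    have hx' : |x| ≤ |x| + |y| + 1 := by linarith [abs_nonneg y]
    have hy' : |y| ≤ |x| + |y| + 1 := by linarith [abs_nonneg x]
    have := hbd f g hf hg x y z hz hx' hy'
    rw [abs_mul, abs_mul, Real.abs_exp] at this
    simpa [Real.norm_eq_abs, abs_mul, Real.abs_exp] using this
  have I1 := hP A A hAc hAc hAg hAg
  have I2 := hP (deriv A) A hA'c hAc hA'g hAg
  have I3 := hP A (deriv A) hAc hA'c hAg hA'g
  -- FTC on (-∞, 0]
  set G : ℝ → ℝ := fun z => Real.exp (-(z * s)) * (A (x + z) * A (y + z)) with hG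
  set Gd : ℝ → ℝ := fun z =>
      (-s) * (Real.exp (-(z * s)) * A (x + z) * A (y + z)) +
      (Real.exp (-(z * s)) * deriv A (x + z) * A (y + z) +
       Real.exp (-(z * s)) * A (x + z) * deriv A (y + z)) with hGd
  have hGderiv : ∀ z : ℝ, HasDerivAt G (Gd z) z := by
    intro z
    have hlin : HasDerivAt (fun z : ℝ => -(z * s)) (-s) z := by
      simpa [Pi.neg_def] using ((hasDerivAt_id z).mul_const s).neg
    have hexp : HasDerivAt (fun z : ℝ => Real.exp (-(z * s)))
        (Real.exp (-(z * s)) * (-s)) z := (Real.hasDerivAt_exp _).comp z hlin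
    have hax : HasDerivAt (fun z : ℝ => A (x + z)) (deriv A (x + z)) z := by
      simpa [Function.comp_def] using (hAd (x + z)).hasDerivAt.comp z ((hasDerivAt_id z).const_add x)
    have hay : HasDerivAt (fun z : ℝ => A (y + z)) (deriv A (y + z)) z := by
      simpa [Function.comp_def] using (hAd (y + z)).hasDerivAt.comp z ((hasDerivAt_id z).const_add y)
    have := hexp.mul (hax.mul hay)
    refine this.congr_deriv ?_
    rw [hGd]; simp only [Pi.mul_apply]; ring
  have hGtendsto : Tendsto G atBot (𝓝 0) := by
    have hb : Tendsto bnd atBot (𝓝 0) := by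
      have h1 : Tendsto (fun z : ℝ => z * (-s / 2)) atBot atBot :=
        Tendsto.atBot_mul_const (by linarith) tendsto_id
      have h2 := Real.tendsto_exp_atBot.comp h1
      simpa [hbnd] using (h2.const_mul K)
    have hbneg : Tendsto (fun z => -bnd z) atBot (𝓝 0) := by
      simpa using hb.neg
    refine tendsto_of_tendsto_of_tendsto_of_le_of_le' hbneg hb ?_ ?_
    · filter_upwards [Iic_mem_atBot (0 : ℝ)] with z hz
      have hx' : |x| ≤ |x| + |y| + 1 := by linarith [abs_nonneg y]
      have hy' : |y| ≤ |x| + |y| + 1 := by linarith [abs_nonneg x]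
      have := hbd A A hAg hAg x y z hz hx' hy'
      have h2 : |G z| ≤ bnd z := by
        rw [hG]; simpa [mul_assoc] using this
      linarith [neg_abs_le (G z), le_abs_self (G z)]
    · filter_upwards [Iic_mem_atBot (0 : ℝ)] with z hz
      have hx' : |x| ≤ |x| + |y| + 1 := by linarith [abs_nonneg y]
      have hy' : |y| ≤ |x| + |y| + 1 := by linarith [abs_nonneg x]
      have := hbd A A hAg hAg x y z hz hx' hy'
      have h2 : |G z| ≤ bnd z := by
        rw [hG]; simpa [mul_assoc] using this
      linarith [le_abs_self (G z)]
  have hGdint : IntegrableOn Gd (Iic (0 : ℝ)) :=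
    (I1.const_mul (-s)).add (I2.add I3)
  have hFTC : ∫ z in Iic (0 : ℝ), Gd z = A x * A y := by
    have := integral_Iic_of_hasDerivAt_of_tendsto' (a := (0 : ℝ)) (m := 0)
      (fun z _ => hGderiv z) hGdint hGtendsto
    rw [this, hG]
    simp
  -- split the FTC integral
  have hsplit : ∫ z in Iic (0 : ℝ), Gd z =
      (-s) * (∫ z in Iic (0 : ℝ), Real.exp (-(z * s)) * A (x + z) * A (y + z)) +
      ((∫ z in Iic (0 : ℝ), Real.exp (-(z * s)) * deriv A (x + z) * A (y + z)) +
       (∫ z in Iic (0 : ℝ), Real.exp (-(z * s)) * A (x + z) * deriv A (y + z))) := by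
    have Ia : Integrable (fun z => (-s) * (Real.exp (-(z * s)) * A (x + z) * A (y + z)))
        (volume.restrict (Iic (0 : ℝ))) := I1.const_mul (-s)
    have Ib : Integrable (fun z => Real.exp (-(z * s)) * deriv A (x + z) * A (y + z) +
        Real.exp (-(z * s)) * A (x + z) * deriv A (y + z))
        (volume.restrict (Iic (0 : ℝ))) := I2.add I3
    rw [hGd]
    rw [integral_add Ia Ib, integral_add I2 I3, integral_const_mul]
  -- pass to Iio
  have hIic1 : (∫ z in Iic (0 : ℝ), Real.exp (-(z * s)) * A (x + z) * A (y + z))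
      = ∫ z in Iio (0 : ℝ), Real.exp (-(z * s)) * A (x + z) * A (y + z) :=
    integral_Iic_eq_integral_Iio
  have hIic2 : (∫ z in Iic (0 : ℝ), Real.exp (-(z * s)) * deriv A (x + z) * A (y + z))
      = ∫ z in Iio (0 : ℝ), Real.exp (-(z * s)) * deriv A (x + z) * A (y + z) :=
    integral_Iic_eq_integral_Iio
  have hIic3 : (∫ z in Iic (0 : ℝ), Real.exp (-(z * s)) * A (x + z) * deriv A (y + z))
      = ∫ z in Iio (0 : ℝ), Real.exp (-(z * s)) * A (x + z) * deriv A (y + z) :=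
    integral_Iic_eq_integral_Iio
  -- differentiation under the integral sign, x variable
  have hballbd : ∀ u : ℝ, ∀ w ∈ Metric.ball u 1, |u| ≤ |x| + |y| + 1 - 1 → |w| ≤ |x| + |y| + 1 := by
    intro u w hw hu
    have : |w - u| < 1 := by rwa [Metric.mem_ball, Real.dist_eq] at hw
    have := abs_sub_abs_le_abs_sub w u
    linarith
  have hdx : HasDerivAt
      (fun x' => ∫ z in Iio (0 : ℝ), Real.exp (-(z * s)) * A (x' + z) * A (y + z))
      (∫ z in Iio (0 : ℝ), Real.exp (-(z * s)) * deriv A (x + z) * A (y + z)) x := by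
    have := hasDerivAt_integral_of_dominated_loc_of_deriv_le
      (μ := volume.restrict (Iio (0 : ℝ))) (x₀ := x)
      (F := fun x' z => Real.exp (-(z * s)) * A (x' + z) * A (y + z))
      (F' := fun x' z => Real.exp (-(z * s)) * deriv A (x' + z) * A (y + z))
      (bound := bnd) (Metric.ball_mem_nhds x one_pos)
      (Eventually.of_forall fun x' =>
        (((Real.continuous_exp.comp (by fun_prop)).mul
          (hAc.comp (by fun_prop))).mul (hAc.comp (by fun_prop))).aestronglyMeasurable)
      (I1.mono_set Iio_subset_Iic_self)
      ((((Real.continuous_exp.comp (by fun_prop)).mul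
          (hA'c.comp (by fun_prop))).mul (hAc.comp (by fun_prop))).aestronglyMeasurable)
      ?_ hbintIio ?_
    · exact this.2
    · refine (ae_restrict_iff' measurableSet_Iio).mpr (ae_of_all _ fun z hz => ?_)
      intro x' hx'
      have hu : |x'| ≤ |x| + |y| + 1 :=
        hballbd x x' hx' (by linarith [abs_nonneg y])
      have hy' : |y| ≤ |x| + |y| + 1 := by linarith [abs_nonneg x]
      have := hbd (deriv A) A hA'g hAg x' y z hz.le hu hy'
      rw [abs_mul, abs_mul, Real.abs_exp] at this
      simpa [Real.norm_eq_abs, abs_mul, Real.abs_exp] using this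
    · refine (ae_restrict_iff' measurableSet_Iio).mpr (ae_of_all _ fun z _ => ?_)
      intro x' _
      have h1 : HasDerivAt (fun w : ℝ => A (w + z)) (deriv A (x' + z)) x' := by
        simpa [Function.comp_def] using (hAd (x' + z)).hasDerivAt.comp x' ((hasDerivAt_id x').add_const z)
      simpa [mul_comm, mul_assoc, mul_left_comm] using
        (h1.const_mul (Real.exp (-(z * s)))).mul_const (A (y + z))
  have hdy : HasDerivAt
      (fun y' => ∫ z in Iio (0 : ℝ), Real.exp (-(z * s)) * A (x + z) * A (y' + z))
      (∫ z in Iio (0 : ℝ), Real.exp (-(z * s)) * A (x + z) * deriv A (y + z)) y := by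
    have := hasDerivAt_integral_of_dominated_loc_of_deriv_le
      (μ := volume.restrict (Iio (0 : ℝ))) (x₀ := y)
      (F := fun y' z => Real.exp (-(z * s)) * A (x + z) * A (y' + z))
      (F' := fun y' z => Real.exp (-(z * s)) * A (x + z) * deriv A (y' + z))
      (bound := bnd) (Metric.ball_mem_nhds y one_pos)
      (Eventually.of_forall fun y' =>
        (((Real.continuous_exp.comp (by fun_prop)).mul
          (hAc.comp (by fun_prop))).mul (hAc.comp (by fun_prop))).aestronglyMeasurable)
      (I1.mono_set Iio_subset_Iic_self)
      ((((Real.continuous_exp.comp (by fun_prop)).mul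
          (hAc.comp (by fun_prop))).mul (hA'c.comp (by fun_prop))).aestronglyMeasurable)
      ?_ hbintIio ?_
    · exact this.2
    · refine (ae_restrict_iff' measurableSet_Iio).mpr (ae_of_all _ fun z hz => ?_)
      intro y' hy'
      have hv : |y'| ≤ |x| + |y| + 1 :=
        hballbd y y' hy' (by linarith [abs_nonneg x])
      have hx' : |x| ≤ |x| + |y| + 1 := by linarith [abs_nonneg y]
      have := hbd A (deriv A) hAg hA'g x y' z hz.le hx' hv
      rw [abs_mul, abs_mul, Real.abs_exp] at this
      simpa [Real.norm_eq_abs, abs_mul, Real.abs_exp] using this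
    · refine (ae_restrict_iff' measurableSet_Iio).mpr (ae_of_all _ fun z _ => ?_)
      intro y' _
      have h1 : HasDerivAt (fun w : ℝ => A (w + z)) (deriv A (y' + z)) y' := by
        simpa [Function.comp_def] using (hAd (y' + z)).hasDerivAt.comp y' ((hasDerivAt_id y').add_const z)
      simpa [mul_comm, mul_assoc, mul_left_comm] using
        (h1.const_mul (Real.exp (-(z * s)) * A (x + z)))
  -- compute the derivatives of Lminus
  have hLx : deriv (fun x' : ℝ => Lminus A s x' y) x
      = -(∫ z in Iio (0 : ℝ), Real.exp (-(z * s)) * deriv A (x + z) * A (y + z)) := by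
    have : (fun x' : ℝ => Lminus A s x' y) =
        fun x' => -(∫ z in Iio (0 : ℝ), Real.exp (-(z * s)) * A (x' + z) * A (y + z)) := rfl
    rw [this]
    exact hdx.neg.deriv
  have hLy : deriv (fun y' : ℝ => Lminus A s x y') y
      = -(∫ z in Iio (0 : ℝ), Real.exp (-(z * s)) * A (x + z) * deriv A (y + z)) := by
    have : (fun y' : ℝ => Lminus A s x y') =
        fun y' => -(∫ z in Iio (0 : ℝ), Real.exp (-(z * s)) * A (x + z) * A (y' + z)) := rfl
    rw [this]
    exact hdy.neg.deriv
  -- conclusion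
  rw [hLx, hLy]
  have hL : Lminus A s x y =
      -(∫ z in Iio (0 : ℝ), Real.exp (-(z * s)) * A (x + z) * A (y + z)) := rfl
  rw [hL]
  rw [hsplit, hIic1, hIic2, hIic3] at hFTC
  linarith [hFTC]
end

section
/- For every s < 0 and all x, y ∈ ℝ, the kernel entry L⁻_s is twice differentiable in each variable and satisfies ∂ₓ² L⁻_s(x,y) − x·L⁻_s(x,y) = −∫_{−∞}^0 z·e^{−z·s}·A(x+z)·A(y+z) dz = ∂_y² L⁻_s(x,y) − y·L⁻_s(x,y); in particular d²/dx² − x applied in the first variable agrees with d²/dy² − y applied in the second variable. -/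
open MeasureTheory Real Set

lemma expMul_integrableOn_Iio {c : ℝ} (hc : 0 < c) :
    IntegrableOn (fun z : ℝ => Real.exp (c * z)) (Iio (0:ℝ)) := by
  have h : IntegrableOn (fun x : ℝ => Real.exp (-c * x)) (Ioi (0:ℝ)) :=
    exp_neg_integrableOn_Ioi 0 hc
  have h_map : ((volume : Measure ℝ).restrict (Ioi 0)).map Neg.neg
      = (volume : Measure ℝ).restrict (Iio 0) := by
    conv => rhs; rw [← Measure.map_neg_eq_self (volume : Measure ℝ),
      measurableEmbedding_neg.restrict_map]
    simp
  rw [IntegrableOn, ← h_map, measurableEmbedding_neg.integrable_map_iff]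
  simpa [Function.comp_def, mul_neg, neg_mul] using h.integrable

lemma polyExp_integrableOn_Iio {c : ℝ} (hc : 0 < c) (M : ℝ) :
    IntegrableOn (fun z : ℝ => M * (1+|z|)^6 * Real.exp (c * z)) (Iio (0:ℝ)) := by
  set D : ℝ := max 1 (12/c) with hD
  have hD1 : (1:ℝ) ≤ D := le_max_left _ _
  have hDc : 1 ≤ D * (c/12) := by
    have h12 : (12/c) * (c/12) = 1 := by field_simp
    calc (1:ℝ) = (12/c) * (c/12) := h12.symm
      _ ≤ D * (c/12) := by
        apply mul_le_mul_of_nonneg_right (le_max_right _ _)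
        positivity
  have hb : ∀ z : ℝ, 1 + |z| ≤ D * Real.exp ((c/12) * |z|) := by
    intro z
    have h1 : (c/12) * |z| + 1 ≤ Real.exp ((c/12) * |z|) := Real.add_one_le_exp _
    have h2 : 1 + |z| ≤ D * ((c/12) * |z| + 1) := by nlinarith [abs_nonneg z]
    calc 1 + |z| ≤ D * ((c/12) * |z| + 1) := h2
      _ ≤ D * Real.exp ((c/12) * |z|) := by
        apply mul_le_mul_of_nonneg_left h1 (by linarith)
  have hg : IntegrableOn (fun z : ℝ => (|M| * D^6) * Real.exp ((c/2) * z)) (Iio 0) :=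
    (expMul_integrableOn_Iio (by positivity : (0:ℝ) < c/2)).const_mul _
  refine hg.mono' ?_ ?_
  · exact (Continuous.aestronglyMeasurable (by fun_prop)).restrict
  · rw [ae_restrict_iff' measurableSet_Iio]
    refine ae_of_all _ fun z hz => ?_
    have hz' : z < 0 := hz
    have habs : |z| = -z := abs_of_neg hz'
    have h2 : (1+|z|)^6 ≤ (D * Real.exp ((c/12) * |z|))^6 := by
      apply pow_le_pow_left₀ (by positivity) (hb z)
    have h3 : (D * Real.exp ((c/12) * |z|))^6 = D^6 * Real.exp ((c/2) * |z|) := by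
      rw [mul_pow, ← Real.exp_nat_mul]
      congr 1
      push_cast; ring
    have h4 : abs (1 + abs z) = 1 + abs z := abs_of_nonneg (by positivity)
    rw [Real.norm_eq_abs, abs_mul, abs_mul, Real.abs_exp, abs_pow, h4]
    have h5 : Real.exp ((c/2) * |z|) * Real.exp (c * z) = Real.exp ((c/2) * z) := by
      rw [← Real.exp_add, habs]; ring_nf
    calc |M| * (1+|z|)^6 * Real.exp (c*z)
        ≤ |M| * (D^6 * Real.exp ((c/2) * |z|)) * Real.exp (c*z) := by
          rw [← h3]
          apply mul_le_mul_of_nonneg_right _ (Real.exp_pos _).le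
          exact mul_le_mul_of_nonneg_left h2 (abs_nonneg M)
      _ = (|M| * D^6) * (Real.exp ((c/2) * |z|) * Real.exp (c * z)) := by ring
      _ = (|M| * D^6) * Real.exp ((c/2) * z) := by rw [h5]

lemma triple_bound {s : ℝ} {D : ℝ} {P Q : ℝ → ℝ}
    (hP : ∀ t, |P t| ≤ D * (1+|t|)^2) (hQ : ∀ t, |Q t| ≤ D * (1+|t|)^2)
    (a b z v : ℝ) (hv : |v| ≤ (1+|z|)^2) :
    |v * (Real.exp (-(z*s)) * P (a+z) * Q (b+z))|
      ≤ (D^2*(1+|a|)^2*(1+|b|)^2) * (1+|z|)^6 * Real.exp ((-s)*z) := by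
  have hD : 0 ≤ D := le_trans (abs_nonneg (P 0)) (by simpa using hP 0)
  have he : Real.exp (-(z*s)) = Real.exp ((-s)*z) := by ring_nf
  have hsplit : ∀ u : ℝ, (1 + |u + z|) ≤ (1+|u|)*(1+|z|) := by
    intro u
    have := abs_add_le u z
    nlinarith [abs_nonneg u, abs_nonneg z]
  have hPz : |P (a+z)| ≤ D * ((1+|a|)*(1+|z|))^2 := by
    refine (hP _).trans ?_
    exact mul_le_mul_of_nonneg_left
      (pow_le_pow_left₀ (by positivity) (hsplit a) 2) hD
  have hQz : |Q (b+z)| ≤ D * ((1+|b|)*(1+|z|))^2 := by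
    refine (hQ _).trans ?_
    exact mul_le_mul_of_nonneg_left
      (pow_le_pow_left₀ (by positivity) (hsplit b) 2) hD
  calc |v * (Real.exp (-(z*s)) * P (a+z) * Q (b+z))|
      = |v| * (Real.exp ((-s)*z) * (|P (a+z)| * |Q (b+z)|)) := by
        rw [abs_mul, abs_mul, abs_mul, Real.abs_exp, he]; ring
    _ ≤ (1+|z|)^2 * (Real.exp ((-s)*z) *
          ((D * ((1+|a|)*(1+|z|))^2) * (D * ((1+|b|)*(1+|z|))^2))) := by
        gcongr
    _ = (D^2*(1+|a|)^2*(1+|b|)^2) * (1+|z|)^6 * Real.exp ((-s)*z) := by ring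

lemma integrableOn_of_cube_bound {c M : ℝ} (hc : 0 < c) {f : ℝ → ℝ} (hf : Continuous f)
    (h : ∀ z : ℝ, |f z| ≤ M * (1+|z|)^6 * Real.exp (c*z)) :
    IntegrableOn f (Iio (0:ℝ)) := by
  refine (polyExp_integrableOn_Iio hc M).mono' hf.aestronglyMeasurable.restrict ?_
  exact ae_of_all _ fun z => by simpa [Real.norm_eq_abs] using h z

lemma hasDerivAt_core {s : ℝ} (hs : s < 0) (B W : ℝ → ℝ)
    (hBd : Differentiable ℝ B) (hB'c : Continuous (deriv B)) (hW : Continuous W)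
    (D : ℝ)
    (hBb : ∀ t, |B t| ≤ D * (1+|t|)^2)
    (hB'b : ∀ t, |deriv B t| ≤ D * (1+|t|)^2)
    (hWb : ∀ t, |W t| ≤ D * (1+|t|)^2)
    (y x : ℝ) :
    HasDerivAt (fun x' => ∫ z in Iio (0:ℝ), Real.exp (-(z*s)) * B (x'+z) * W (y+z))
      (∫ z in Iio (0:ℝ), Real.exp (-(z*s)) * deriv B (x+z) * W (y+z)) x := by
  have hc : (0:ℝ) < -s := by linarith
  have hBc : Continuous B := hBd.continuous
  have hone : ∀ z : ℝ, |(1:ℝ)| ≤ (1+|z|)^2 := fun z => by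
    rw [abs_one]; nlinarith [abs_nonneg z]
  have key := hasDerivAt_integral_of_dominated_loc_of_deriv_le
    (μ := (volume : Measure ℝ).restrict (Iio 0))
    (F := fun x' z => Real.exp (-(z*s)) * B (x'+z) * W (y+z))
    (F' := fun x' z => Real.exp (-(z*s)) * deriv B (x'+z) * W (y+z))
    (x₀ := x)
    (bound := fun z => (D^2*(2+|x|)^2*(1+|y|)^2) * (1+|z|)^6 * Real.exp ((-s)*z))
    (s := Metric.ball x 1) (Metric.ball_mem_nhds x one_pos)
    (Filter.Eventually.of_forall fun x' =>
      (Continuous.aestronglyMeasurable (by fun_prop)).restrict)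
    ?_ ((Continuous.aestronglyMeasurable (by fun_prop)).restrict) ?_ ?_ ?_
  · exact key.2
  · -- integrability of F x
    apply integrableOn_of_cube_bound hc (by fun_prop)
    intro z
    have := triple_bound (s:=s) hBb hWb x y z 1 (hone z)
    simpa [neg_mul] using this
  · -- bound for F' on ball
    refine ae_of_all _ fun z x' hx' => ?_
    have hx1 : |x'| ≤ |x| + 1 := by
      have h1 : |x' - x| < 1 := by simpa [Real.dist_eq] using hx'
      have := abs_sub_abs_le_abs_sub x' x
      linarith
    have hb := triple_bound (s:=s) hB'b hWb x' y z 1 (hone z)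
    rw [one_mul] at hb
    rw [Real.norm_eq_abs]
    refine hb.trans ?_
    have h2 : (1:ℝ)+|x'| ≤ 2+|x| := by linarith
    refine mul_le_mul_of_nonneg_right (mul_le_mul_of_nonneg_right
      (mul_le_mul_of_nonneg_right (mul_le_mul_of_nonneg_left
        (pow_le_pow_left₀ (by positivity) h2 2) (by positivity))
        (by positivity)) (by positivity)) (Real.exp_pos _).le
  · -- integrability of bound
    exact polyExp_integrableOn_Iio hc (D^2*(2+|x|)^2*(1+|y|)^2)
  · -- differentiability
    refine ae_of_all _ fun z x' _ => ?_
    have h1 : HasDerivAt (fun u : ℝ => B (u+z)) (deriv B (x'+z)) x' := by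
      have hinner : HasDerivAt (fun u : ℝ => u + z) 1 x' := (hasDerivAt_id x').add_const z
      have := ((hBd (x'+z)).hasDerivAt).comp x' hinner
      rw [mul_one] at this; exact this
    exact (h1.const_mul (Real.exp (-(z*s)))).mul_const (W (y+z))

lemma side_lemma (A : ℝ → ℝ) (hAd : Differentiable ℝ A) (hA'd : Differentiable ℝ (deriv A))
    (hA''c : Continuous (deriv (deriv A)))
    (hAiry : ∀ t : ℝ, deriv (deriv A) t = t * A t)
    (C : ℝ)
    (bA : ∀ t, |A t| ≤ C * (1+|t|)^2)
    (bA' : ∀ t, |deriv A t| ≤ C * (1+|t|)^2)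
    (bA'' : ∀ t, |deriv (deriv A) t| ≤ C * (1+|t|)^2)
    {s : ℝ} (hs : s < 0) (b a : ℝ) :
    DifferentiableAt ℝ
      (fun u : ℝ => -∫ z in Iio (0:ℝ), Real.exp (-(z*s)) * A (u+z) * A (b+z)) a ∧
    DifferentiableAt ℝ
      (deriv (fun u : ℝ => -∫ z in Iio (0:ℝ), Real.exp (-(z*s)) * A (u+z) * A (b+z))) a ∧
    deriv (deriv (fun u : ℝ => -∫ z in Iio (0:ℝ), Real.exp (-(z*s)) * A (u+z) * A (b+z))) a
        - a * (-∫ z in Iio (0:ℝ), Real.exp (-(z*s)) * A (a+z) * A (b+z))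
      = -∫ z in Iio (0:ℝ), z * Real.exp (-(z*s)) * A (a+z) * A (b+z) := by
  have hc : (0:ℝ) < -s := by linarith
  have h1 : ∀ u : ℝ, HasDerivAt
      (fun u' => ∫ z in Iio (0:ℝ), Real.exp (-(z*s)) * A (u'+z) * A (b+z))
      (∫ z in Iio (0:ℝ), Real.exp (-(z*s)) * deriv A (u+z) * A (b+z)) u :=
    fun u => hasDerivAt_core hs A A hAd hA'd.continuous hAd.continuous C bA bA' bA b u
  have h2 : HasDerivAt
      (fun u => ∫ z in Iio (0:ℝ), Real.exp (-(z*s)) * deriv A (u+z) * A (b+z))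
      (∫ z in Iio (0:ℝ), Real.exp (-(z*s)) * deriv (deriv A) (a+z) * A (b+z)) a :=
    hasDerivAt_core hs (deriv A) A hA'd hA''c hAd.continuous C bA' bA'' bA b a
  have e1 : deriv (fun u : ℝ => -∫ z in Iio (0:ℝ), Real.exp (-(z*s)) * A (u+z) * A (b+z))
      = fun u => -∫ z in Iio (0:ℝ), Real.exp (-(z*s)) * deriv A (u+z) * A (b+z) :=
    funext fun u => ((h1 u).neg).deriv
  refine ⟨((h1 a).neg).differentiableAt, ?_, ?_⟩
  · rw [e1]; exact (h2.neg).differentiableAt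
  · rw [e1, (show HasDerivAt (fun u => -∫ z in Iio (0:ℝ), Real.exp (-(z*s)) * deriv A (u+z) * A (b+z)) _ a from h2.neg).deriv]
    have hone : ∀ z : ℝ, |(1:ℝ)| ≤ (1+|z|)^2 := fun z => by
      rw [abs_one]; nlinarith [abs_nonneg z]
    have hzb : ∀ z : ℝ, |z| ≤ (1+|z|)^2 := fun z => by nlinarith [abs_nonneg z]
    have hIe : IntegrableOn (fun z => Real.exp (-(z*s)) * A (a+z) * A (b+z)) (Iio (0:ℝ)) := by
      apply integrableOn_of_cube_bound hc (by have := hAd.continuous; fun_prop)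
      intro z
      simpa using triple_bound (s:=s) bA bA a b z 1 (hone z)
    have hIz : IntegrableOn (fun z => z * (Real.exp (-(z*s)) * A (a+z) * A (b+z)))
        (Iio (0:ℝ)) := by
      apply integrableOn_of_cube_bound hc (by have := hAd.continuous; fun_prop)
      intro z
      exact triple_bound (s:=s) bA bA a b z z (hzb z)
    have split : (∫ z in Iio (0:ℝ), Real.exp (-(z*s)) * deriv (deriv A) (a+z) * A (b+z))
        = a * (∫ z in Iio (0:ℝ), Real.exp (-(z*s)) * A (a+z) * A (b+z))
          + ∫ z in Iio (0:ℝ), z * (Real.exp (-(z*s)) * A (a+z) * A (b+z)) := by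
      rw [← MeasureTheory.integral_const_mul,
        ← MeasureTheory.integral_add (hIe.const_mul a) hIz]
      refine setIntegral_congr_fun measurableSet_Iio fun z _ => ?_
      rw [hAiry (a+z)]
      ring
    have final : (∫ z in Iio (0:ℝ), z * (Real.exp (-(z*s)) * A (a+z) * A (b+z)))
        = ∫ z in Iio (0:ℝ), z * Real.exp (-(z*s)) * A (a+z) * A (b+z) :=
      setIntegral_congr_fun measurableSet_Iio fun z _ => by ring
    rw [split, final]
    ring

/-- For every `s < 0` and all `x, y ∈ ℝ`, `L⁻_s` is twice differentiable in each
variable and satisfies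
`∂ₓ² L⁻_s(x,y) − x·L⁻_s(x,y) = −∫_{−∞}^0 z·e^{−z·s}·A(x+z)·A(y+z) dz
  = ∂_y² L⁻_s(x,y) − y·L⁻_s(x,y)`;
in particular `d²/dx² − x` in the first variable agrees with `d²/dy² − y` in the
second variable. -/
theorem lminus_airy_operator_symm
    (A : ℝ → ℝ) (hA : ContDiff ℝ 2 A)
    (hAiry : ∀ t : ℝ, deriv (deriv A) t = t * A t)
    (C : ℝ) (hC : 0 < C)
    (hA1 : ∀ t : ℝ, 0 ≤ t → |A t| ≤ C * Real.exp (-t))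
    (hA1' : ∀ t : ℝ, 0 ≤ t → |deriv A t| ≤ C * Real.exp (-t))
    (hA2 : ∀ t : ℝ, t ≤ 0 → |A t| ≤ C * (1 + |t|))
    (hA2' : ∀ t : ℝ, t ≤ 0 → |deriv A t| ≤ C * (1 + |t|))
    (s : ℝ) (hs : s < 0) (x y : ℝ) :
    DifferentiableAt ℝ (fun x' : ℝ => Lminus A s x' y) x ∧
    DifferentiableAt ℝ (deriv (fun x' : ℝ => Lminus A s x' y)) x ∧
    DifferentiableAt ℝ (fun y' : ℝ => Lminus A s x y') y ∧
    DifferentiableAt ℝ (deriv (fun y' : ℝ => Lminus A s x y')) y ∧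
    deriv (deriv (fun x' : ℝ => Lminus A s x' y)) x - x * Lminus A s x y
      = -∫ z in Set.Iio (0 : ℝ), z * Real.exp (-(z * s)) * A (x + z) * A (y + z) ∧
    (-∫ z in Set.Iio (0 : ℝ), z * Real.exp (-(z * s)) * A (x + z) * A (y + z))
      = deriv (deriv (fun y' : ℝ => Lminus A s x y')) y - y * Lminus A s x y := by
  -- regularity
  have h2 : ContDiff ℝ ((1:WithTop ℕ∞) + 1) A := by
    norm_num
    exact hA
  obtain ⟨hAd, -, hA'cd⟩ := contDiff_succ_iff_deriv.mp h2
  obtain ⟨hA'd, hA''c⟩ := contDiff_one_iff_deriv.mp hA'cd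
  -- global polynomial bounds
  have bexp : ∀ t : ℝ, 0 ≤ t → Real.exp (-t) ≤ 1 :=
    fun t ht => Real.exp_le_one_iff.mpr (by linarith)
  have bA1 : ∀ t, |A t| ≤ C * (1 + |t|) := by
    intro t
    rcases le_or_gt t 0 with h | h
    · exact hA2 t h
    · refine (hA1 t h.le).trans ?_
      have := bexp t h.le
      nlinarith [abs_nonneg t]
  have bA1' : ∀ t, |deriv A t| ≤ C * (1 + |t|) := by
    intro t
    rcases le_or_gt t 0 with h | h
    · exact hA2' t h
    · refine (hA1' t h.le).trans ?_
      have := bexp t h.le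
      nlinarith [abs_nonneg t]
  have bA : ∀ t, |A t| ≤ C * (1 + |t|)^2 := fun t => (bA1 t).trans (by nlinarith [abs_nonneg t, hC.le, mul_nonneg hC.le (abs_nonneg t)])
  have bA' : ∀ t, |deriv A t| ≤ C * (1 + |t|)^2 :=
    fun t => (bA1' t).trans (by nlinarith [abs_nonneg t, hC.le, mul_nonneg hC.le (abs_nonneg t)])
  have bA'' : ∀ t, |deriv (deriv A) t| ≤ C * (1 + |t|)^2 := by
    intro t
    rw [hAiry t, abs_mul]
    calc |t| * |A t| ≤ (1 + |t|) * (C * (1 + |t|)) := by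
          apply mul_le_mul (by linarith [abs_nonneg t]) (bA1 t) (abs_nonneg _)
            (by positivity)
      _ = C * (1 + |t|)^2 := by ring
  -- x-side
  obtain ⟨d1, d2, e5⟩ := side_lemma A hAd hA'd hA''c hAiry C bA bA' bA'' hs y x
  -- y-side
  obtain ⟨d3, d4, e6⟩ := side_lemma A hAd hA'd hA''c hAiry C bA bA' bA'' hs x y
  have hswap : (fun y' : ℝ => Lminus A s x y')
      = (fun u : ℝ => -∫ z in Iio (0:ℝ), Real.exp (-(z*s)) * A (u+z) * A (x+z)) := by
    funext u
    simp only [Lminus]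
    congr 1
    exact setIntegral_congr_fun measurableSet_Iio fun z _ => by ring
  have c1 : Lminus A s x y = -∫ z in Iio (0:ℝ), Real.exp (-(z*s)) * A (y+z) * A (x+z) := by
    simp only [Lminus]
    congr 1
    exact setIntegral_congr_fun measurableSet_Iio fun z _ => by ring
  have c2 : (-∫ z in Iio (0:ℝ), z * Real.exp (-(z*s)) * A (y+z) * A (x+z))
      = -∫ z in Iio (0:ℝ), z * Real.exp (-(z*s)) * A (x+z) * A (y+z) := by
    congr 1
    exact setIntegral_congr_fun measurableSet_Iio fun z _ => by ring
  refine ⟨?_, ?_, ?_, ?_, ?_, ?_⟩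
  · simpa only [Lminus] using d1
  · simpa only [Lminus] using d2
  · rw [hswap]; exact d3
  · rw [hswap]; exact d4
  · simpa only [Lminus] using e5
  · rw [hswap, c1]
    exact c2.symm.trans e6.symm
end

section
/- Suppose q, p, u, q̃, r : ℝ → M_m(ℝ) are differentiable (q twice differentiable) and satisfy the first-order system Dq = p − q·Θ·u + [τ, q], Dp = Ξ·q + q·Θ·q̃·q + (Dq)·Θ·u − 2·[τ, r]·q − [τ, Dq], and Du = −q̃·q. Then q satisfies the second-order equation D²q = Ξ·q + 2·q·Θ·q̃·q − 2·[τ, r]·q (equation (1) of the system characterizing the Airy process). -/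
open Matrix

attribute [local instance] Matrix.normedAddCommGroup Matrix.normedSpace

/-- Matrix multiplication as a continuous bilinear map (sup norm, finite dim). -/
noncomputable def mulCLM (m : ℕ) :
    Matrix (Fin m) (Fin m) ℝ →L[ℝ] Matrix (Fin m) (Fin m) ℝ →L[ℝ] Matrix (Fin m) (Fin m) ℝ :=
  LinearMap.toContinuousLinearMap
    { toFun := fun A => LinearMap.toContinuousLinearMap (LinearMap.mul ℝ _ A)
      map_add' := by intros; ext; simp [add_mul]
      map_smul' := by intros; ext; simp [smul_mul_assoc] }

lemma mulCLM_apply {m : ℕ} (A B : Matrix (Fin m) (Fin m) ℝ) : mulCLM m A B = A * B := rfl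

lemma hasDerivAt_matmul {m : ℕ} {a b : ℝ → Matrix (Fin m) (Fin m) ℝ}
    {a' b' : Matrix (Fin m) (Fin m) ℝ} {x : ℝ}
    (ha : HasDerivAt a a' x) (hb : HasDerivAt b b' x) :
    HasDerivAt (fun y => a y * b y) (a x * b' + a' * b x) x := by
  have := (mulCLM m).hasDerivAt_of_bilinear (fun _ => ha) (fun _ => hb)
  exact this

/-- Equation (1) of the system characterizing the Airy process:
if `Dq = p − q·Θ·u + [τ, q]`,
`Dp = Ξ·q + q·Θ·q̃·q + (Dq)·Θ·u − 2·[τ, r]·q − [τ, Dq]`, and `Du = −q̃·q`, then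
`D²q = Ξ·q + 2·q·Θ·q̃·q − 2·[τ, r]·q`. -/
theorem airy_system_eq1
    (m : ℕ) (hm : 1 ≤ m)
    (τ Θ : Matrix (Fin m) (Fin m) ℝ)
    (hτ : τ.IsDiag) (hΘ : ∀ i j, Θ i j = 1)
    (Ξ q p u qt r : ℝ → Matrix (Fin m) (Fin m) ℝ)
    (hΞdiff : Differentiable ℝ Ξ) (hΞdiag : ∀ x, (Ξ x).IsDiag)
    (hq : Differentiable ℝ q) (hq' : Differentiable ℝ (deriv q))
    (hp : Differentiable ℝ p) (hu : Differentiable ℝ u)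
    (hqt : Differentiable ℝ qt) (hr : Differentiable ℝ r)
    (eq_q : ∀ x, deriv q x = p x - q x * Θ * u x + ⁅τ, q x⁆)
    (eq_p : ∀ x, deriv p x =
      Ξ x * q x + q x * Θ * qt x * q x + deriv q x * Θ * u x
        - (2 : ℝ) • (⁅τ, r x⁆ * q x) - ⁅τ, deriv q x⁆)
    (eq_u : ∀ x, deriv u x = -(qt x * q x)) :
    ∀ x, deriv (deriv q) x =
      Ξ x * q x + (2 : ℝ) • (q x * Θ * qt x * q x) - (2 : ℝ) • (⁅τ, r x⁆ * q x) := by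
  intro x
  have hqd : ∀ y, HasDerivAt q (deriv q y) y := fun y => (hq y).hasDerivAt
  have hpd : HasDerivAt p (deriv p x) x := (hp x).hasDerivAt
  have hud : HasDerivAt u (deriv u x) x := (hu x).hasDerivAt
  have h1 : HasDerivAt (fun y => q y * Θ * u y)
      (q x * Θ * deriv u x + deriv q x * Θ * u x) x := by
    have hA : HasDerivAt (fun y => q y * Θ) (deriv q x * Θ) x := by
      simpa using hasDerivAt_matmul (hqd x) (hasDerivAt_const x Θ)
    simpa using hasDerivAt_matmul hA hud
  have h2 : HasDerivAt (fun y => ⁅τ, q y⁆) ⁅τ, deriv q x⁆ x := by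
    simp only [Ring.lie_def]
    have hl : HasDerivAt (fun y => τ * q y) (τ * deriv q x) x := by
      simpa using hasDerivAt_matmul (hasDerivAt_const x τ) (hqd x)
    have hr2 : HasDerivAt (fun y => q y * τ) (deriv q x * τ) x := by
      simpa using hasDerivAt_matmul (hqd x) (hasDerivAt_const x τ)
    exact hl.sub hr2
  have hF : HasDerivAt (fun y => p y - q y * Θ * u y + ⁅τ, q y⁆)
      (deriv p x - (q x * Θ * deriv u x + deriv q x * Θ * u x) + ⁅τ, deriv q x⁆) x :=
    (hpd.sub h1).add h2
  have hderiv : deriv q = fun y => p y - q y * Θ * u y + ⁅τ, q y⁆ := funext eq_q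
  have : deriv (deriv q) x
      = deriv p x - (q x * Θ * deriv u x + deriv q x * Θ * u x) + ⁅τ, deriv q x⁆ := by
    conv_lhs => rw [hderiv]
    exact hF.deriv
  rw [this, eq_p, eq_u]
  simp only [mul_neg, two_smul, mul_assoc]
  abel
end
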